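/- arXiv:1107.2319 — 9 statements merged into one kernel-verified Lean document; each statement's English description precedes it below -/
import Mathlib

section
/- Let L₁, L₂ ⊆ ℝ² be convex bodies with 0 in their interiors such that for some constants c₊, c₋ > 0: ρ_{L_i}(e₁) = h_{L_i}(e₁) = c₊ and ρ_{L_i}(−e₁) = h_{L_i}(−e₁) = c₋ for i = 1,2. Then L := (L₁ ∩ H⁺) ∪ (L₂ ∩ H⁻) is a convex body with 0 ∈ int(L), and L* = (L₂* ∩ H⁺) ∪ (L₁* ∩ H⁻). -/
open RealInnerProductSpace Set
open scoped ENNReal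

noncomputable section

abbrev Eu (n : ℕ) := EuclideanSpace ℝ (Fin n)

/-- The dual of a set: `C* = {u | 1 + ⟪u,v⟫ ≥ 0 for all v ∈ C}`. -/
def dualSet {n : ℕ} (C : Set (Eu n)) : Set (Eu n) := {u | ∀ v ∈ C, 0 ≤ 1 + ⟪u, v⟫}

/-- The polar of a set: `C° = {u | ⟪u,v⟫ ≤ 1 for all v ∈ C}`. -/
def polarSet {n : ℕ} (C : Set (Eu n)) : Set (Eu n) := {u | ∀ v ∈ C, ⟪u, v⟫ ≤ 1}

/-- The support function `h_C(u) = sup {⟪x,u⟫ | x ∈ C}`. -/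
def supp {n : ℕ} (C : Set (Eu n)) (u : Eu n) : ℝ := sSup ((fun x => ⟪x, u⟫) '' C)

/-- The radial function `ρ_K(u) = sup {λ ≥ 0 | λ • u ∈ K}`. -/
def radial {n : ℕ} (K : Set (Eu n)) (u : Eu n) : ℝ := sSup {l : ℝ | 0 ≤ l ∧ l • u ∈ K}

/-- The normal cone of `C` at `x`. -/
def normalCone {n : ℕ} (C : Set (Eu n)) (x : Eu n) : Set (Eu n) :=
  {u | ∀ y ∈ C, ⟪u, y - x⟫ ≤ 0}

/-- `F` is a face of the convex set `C`. -/
def IsFace {n : ℕ} (C F : Set (Eu n)) : Prop :=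
  F ⊆ C ∧ Convex ℝ F ∧ ∀ x ∈ C, ∀ z ∈ C, ∀ y ∈ F, y ∈ openSegment ℝ x z → x ∈ F ∧ z ∈ F

/-- `F` is an exposed face of `C`: it is `∅`, `C`, or `C ∩ H_C(u)` for some nonzero `u`. -/
def IsExposedFace {n : ℕ} (C F : Set (Eu n)) : Prop :=
  F = ∅ ∨ F = C ∨ ∃ u : Eu n, u ≠ 0 ∧ F = {x ∈ C | ⟪x, u⟫ = supp C u}

/-- The conjugate face of a subset `F` of `C`, inside the polar body. -/
def conjFace {n : ℕ} (C F : Set (Eu n)) : Set (Eu n) :=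
  {v ∈ polarSet C | ∀ u ∈ F, ⟪v, u⟫ = 1}

/-- The positive hull: `pos(X) = {λx | λ ≥ 0, x ∈ X}` for nonempty `X`, and `pos ∅ = {0}`. -/
def posHull {n : ℕ} (X : Set (Eu n)) : Set (Eu n) :=
  {w | w = 0 ∨ ∃ l : ℝ, 0 ≤ l ∧ ∃ x ∈ X, w = l • x}

def e₁ : Eu 2 := EuclideanSpace.single 0 1

/-- The closed upper half-plane. -/
def Hplus : Set (Eu 2) := {p | 0 ≤ p 1}

/-- The closed lower half-plane. -/
def Hminus : Set (Eu 2) := {p | p 1 ≤ 0}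


lemma inner_coords (u v : Eu 2) : ⟪u, v⟫ = u 0 * v 0 + u 1 * v 1 := by
  simp [PiLp.inner_apply, Fin.sum_univ_two, RCLike.inner_apply, mul_comm]

lemma norm_e₁ : ‖e₁‖ = 1 := by simp [e₁]

lemma coords_smul (c : ℝ) : ((c • e₁ : Eu 2) 0 = c ∧ (c • e₁ : Eu 2) 1 = 0) ∧
    ((c • (-e₁) : Eu 2) 0 = -c ∧ (c • (-e₁) : Eu 2) 1 = 0) := by
  refine ⟨⟨?_, ?_⟩, ⟨?_, ?_⟩⟩ <;> simp [e₁, EuclideanSpace.single_apply]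

lemma coords_comb (u v : Eu 2) (c d : ℝ) (i : Fin 2) :
    (c • u + d • v) i = c * u i + d * v i := by
  simp [PiLp.add_apply, PiLp.smul_apply]

lemma eq_of_coords (u v : Eu 2) (h0 : u 0 = v 0) (h1 : u 1 = v 1) : u = v := by
  ext i
  fin_cases i
  · exact h0
  · exact h1

lemma radial_smul_mem {K : Set (Eu 2)} (hc : IsCompact K) (h0 : (0 : Eu 2) ∈ K)
    {u : Eu 2} (hu : ‖u‖ = 1) : radial K u • u ∈ K := by
  obtain ⟨R, hR⟩ := hc.isBounded.subset_closedBall 0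
  set S := {l : ℝ | 0 ≤ l ∧ l • u ∈ K} with hS
  have hsub : S ⊆ Set.Icc 0 R := by
    rintro l ⟨hl0, hlK⟩
    refine ⟨hl0, ?_⟩
    have := hR hlK
    rwa [Metric.mem_closedBall, dist_zero_right, norm_smul, hu, mul_one,
      Real.norm_eq_abs, abs_of_nonneg hl0] at this
  have hclosed : IsClosed S :=
    IsClosed.inter isClosed_Ici (hc.isClosed.preimage (continuous_id.smul continuous_const))
  have hcomp : IsCompact S := isCompact_Icc.of_isClosed_subset hclosed hsub
  have hmem : sSup S ∈ S := hcomp.sSup_mem ⟨0, le_refl 0, by simpa using h0⟩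
  exact hmem.2

lemma mem_le_supp {K : Set (Eu 2)} (hc : IsCompact K) {x : Eu 2} (hx : x ∈ K) (u : Eu 2) :
    ⟪x, u⟫ ≤ supp K u :=
  le_csSup ((hc.image (continuous_id.inner continuous_const)).bddAbove) ⟨x, hx, rfl⟩

lemma axis_mem {K : Set (Eu 2)} (hv : Convex ℝ K) {cp cm : ℝ} (hcp : 0 < cp) (hcm : 0 < cm)
    (hP : cp • e₁ ∈ K) (hQ : cm • (-e₁) ∈ K)
    (p : Eu 2) (h1 : p 1 = 0) (h0 : -cm ≤ p 0) (h0' : p 0 ≤ cp) : p ∈ K := by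
  set t := (p 0 + cm) / (cp + cm) with ht
  have hden : (0 : ℝ) < cp + cm := by linarith
  have ht0 : 0 ≤ t := div_nonneg (by linarith) hden.le
  have ht1 : t ≤ 1 := by rw [ht, div_le_one hden]; linarith
  have hp : p = t • (cp • e₁) + (1 - t) • (cm • (-e₁)) := by
    refine eq_of_coords _ _ ?_ ?_
    · rw [coords_comb, (coords_smul cp).1.1, (coords_smul cm).2.1, ht]
      field_simp
      ring
    · rw [coords_comb, (coords_smul cp).1.2, (coords_smul cm).2.2, h1]
      ring
  rw [hp]
  exact hv hP hQ ht0 (by linarith) (by ring)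

lemma crossing (ε : ℝ) (hε : ε = 1 ∨ ε = -1) {K : Set (Eu 2)} (hv : Convex ℝ K)
    {cmb cpb : ℝ}
    (haxis : ∀ p : Eu 2, p 1 = 0 → -cmb ≤ p 0 → p 0 ≤ cpb → p ∈ K)
    {x y : Eu 2} (hx : x ∈ K)
    (hx0 : -cmb ≤ x 0) (hx0' : x 0 ≤ cpb) (hy0 : -cmb ≤ y 0) (hy0' : y 0 ≤ cpb)
    (hx1 : 0 ≤ ε * x 1) (hy1 : ε * y 1 ≤ 0)
    {a b : ℝ} (ha : 0 ≤ a) (hb : 0 ≤ b) (hab : a + b = 1)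
    (hz : 0 ≤ ε * (a * x 1 + b * y 1)) : a • x + b • y ∈ K := by
  have hε0 : ε ≠ 0 := by rcases hε with h | h <;> simp [h]
  rcases eq_or_lt_of_le hy1 with hY0 | hY0
  · have hy10 : y 1 = 0 := (mul_eq_zero.1 hY0).resolve_left hε0
    have hyK : y ∈ K := haxis y hy10 hy0 hy0'
    exact hv hx hyK ha hb hab
  · rcases eq_or_lt_of_le hx1 with hX0 | hX0
    · have hx10 : x 1 = 0 := (mul_eq_zero.1 hX0.symm).resolve_left hε0
      have hb0 : b = 0 := by
        by_contra hbne
        have hbpos : 0 < b := lt_of_le_of_ne hb (Ne.symm hbne)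
        have h1 : ε * (a * x 1 + b * y 1) = a * (ε * x 1) + b * (ε * y 1) := by ring
        rw [h1, ← hX0] at hz
        nlinarith
      have ha1 : a = 1 := by linarith
      rw [ha1, hb0]
      simpa using hx
    · set X := ε * x 1 with hXdef
      set Y := ε * y 1 with hYdef
      set d := X - Y with hd
      have hdpos : 0 < d := by simp only [hd]; linarith
      set s := -Y / d with hs
      have hs0 : 0 ≤ s := div_nonneg (by linarith) hdpos.le
      have hs1 : s ≤ 1 := by rw [hs, div_le_one hdpos]; linarith
      set m := s • x + (1 - s) • y with hm
      have hm1 : m 1 = 0 := by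
        have h1 : m 1 = s * x 1 + (1 - s) * y 1 := coords_comb x y s (1 - s) 1
        have h2 : ε * m 1 = s * X + (1 - s) * Y := by rw [h1, hXdef, hYdef]; ring
        have h3 : s * X + (1 - s) * Y = 0 := by
          have hsd : s * d = -Y := by rw [hs]; exact div_mul_cancel₀ _ hdpos.ne'
          linear_combination hsd - s * hd
        exact (mul_eq_zero.1 (h2.trans h3)).resolve_left hε0
      have hm0a : -cmb ≤ m 0 := by
        have h1 : m 0 = s * x 0 + (1 - s) * y 0 := coords_comb x y s (1 - s) 0
        nlinarith
      have hm0b : m 0 ≤ cpb := by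
        have h1 : m 0 = s * x 0 + (1 - s) * y 0 := coords_comb x y s (1 - s) 0
        nlinarith
      have hmK : m ∈ K := haxis m hm1 hm0a hm0b
      set t := 1 - b * d / X with htdef
      have ht1 : t ≤ 1 := by
        have : 0 ≤ b * d / X := div_nonneg (mul_nonneg hb hdpos.le) hX0.le
        rw [htdef]; linarith
      have hz' : 0 ≤ a * X + b * Y := by
        rw [hXdef, hYdef]
        nlinarith [hz]
      have ht0 : 0 ≤ t := by
        rw [htdef, sub_nonneg, div_le_one hX0]
        nlinarith
      have hca : a = t + (1 - t) * s := by
        have hba : a = 1 - b := by linarith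
        have hsd : s * d = -Y := by rw [hs]; exact div_mul_cancel₀ _ hdpos.ne'
        have ht' : (1 - t) * X = b * d := by
          rw [htdef, sub_sub_cancel, div_mul_cancel₀ _ hX0.ne']
        apply mul_right_cancel₀ hX0.ne'
        linear_combination X * hba + (1 - s) * ht' - b * hsd + b * hd
      have hcb : b = (1 - t) * (1 - s) := by
        have hsd : s * d = -Y := by rw [hs]; exact div_mul_cancel₀ _ hdpos.ne'
        have ht' : (1 - t) * X = b * d := by
          rw [htdef, sub_sub_cancel, div_mul_cancel₀ _ hX0.ne']
        apply mul_right_cancel₀ hX0.ne'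
        linear_combination -(1 - s) * ht' + b * hsd - b * hd
      have key : a • x + b • y = t • x + (1 - t) • m := by
        rw [hm, smul_add, smul_smul, smul_smul, ← add_assoc, ← add_smul, hca, hcb]
      rw [key]
      exact hv hx hmK ht0 (by linarith) (by ring)

/-- gluing upper and lower halves of two convex bodies with equal
x-extension gives a convex body, whose dual is the glueing of the swapped duals. -/
theorem stmt6 (L₁ L₂ : Set (Eu 2))
    (h₁c : IsCompact L₁) (h₁v : Convex ℝ L₁) (h₁0 : (0 : Eu 2) ∈ interior L₁)
    (h₂c : IsCompact L₂) (h₂v : Convex ℝ L₂) (h₂0 : (0 : Eu 2) ∈ interior L₂)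
    (cp cm : ℝ) (hcp : 0 < cp) (hcm : 0 < cm)
    (h1p : radial L₁ e₁ = cp) (h1ps : supp L₁ e₁ = cp)
    (h1m : radial L₁ (-e₁) = cm) (h1ms : supp L₁ (-e₁) = cm)
    (h2p : radial L₂ e₁ = cp) (h2ps : supp L₂ e₁ = cp)
    (h2m : radial L₂ (-e₁) = cm) (h2ms : supp L₂ (-e₁) = cm) :
    IsCompact ((L₁ ∩ Hplus) ∪ (L₂ ∩ Hminus)) ∧
    Convex ℝ ((L₁ ∩ Hplus) ∪ (L₂ ∩ Hminus)) ∧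
    (0 : Eu 2) ∈ interior ((L₁ ∩ Hplus) ∪ (L₂ ∩ Hminus)) ∧
    dualSet ((L₁ ∩ Hplus) ∪ (L₂ ∩ Hminus)) =
      (dualSet L₂ ∩ Hplus) ∪ (dualSet L₁ ∩ Hminus) := by
  have h10 : (0 : Eu 2) ∈ L₁ := interior_subset h₁0
  have h20 : (0 : Eu 2) ∈ L₂ := interior_subset h₂0
  have hne : ‖(-e₁ : Eu 2)‖ = 1 := by rw [norm_neg]; exact norm_e₁
  have hP1 : cp • e₁ ∈ L₁ := h1p ▸ radial_smul_mem h₁c h10 norm_e₁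
  have hQ1 : cm • (-e₁) ∈ L₁ := h1m ▸ radial_smul_mem h₁c h10 hne
  have hP2 : cp • e₁ ∈ L₂ := h2p ▸ radial_smul_mem h₂c h20 norm_e₁
  have hQ2 : cm • (-e₁) ∈ L₂ := h2m ▸ radial_smul_mem h₂c h20 hne
  -- coordinate bounds for members
  have hbound : ∀ (K : Set (Eu 2)), IsCompact K → supp K e₁ = cp → supp K (-e₁) = cm →
      ∀ x ∈ K, -cm ≤ x 0 ∧ x 0 ≤ cp := by
    intro K hc hsp hsm x hx
    have h1 := mem_le_supp hc hx e₁
    have h2 := mem_le_supp hc hx (-e₁)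
    rw [hsp, inner_coords] at h1
    rw [hsm, inner_coords] at h2
    have he0 : e₁ 0 = 1 := by simp [e₁, EuclideanSpace.single_apply]
    have he1 : e₁ 1 = 0 := by simp [e₁, EuclideanSpace.single_apply]
    have hne0 : (-e₁ : Eu 2) 0 = -1 := by simp [e₁, EuclideanSpace.single_apply]
    have hne1 : (-e₁ : Eu 2) 1 = 0 := by simp [e₁, EuclideanSpace.single_apply]
    rw [he0, he1] at h1
    rw [hne0, hne1] at h2
    constructor <;> nlinarith
  have hb1 := hbound L₁ h₁c h1ps h1ms
  have hb2 := hbound L₂ h₂c h2ps h2ms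
  have hax1 : ∀ p : Eu 2, p 1 = 0 → -cm ≤ p 0 → p 0 ≤ cp → p ∈ L₁ :=
    fun p => axis_mem h₁v hcp hcm hP1 hQ1 p
  have hax2 : ∀ p : Eu 2, p 1 = 0 → -cm ≤ p 0 → p 0 ≤ cp → p ∈ L₂ :=
    fun p => axis_mem h₂v hcp hcm hP2 hQ2 p
  have hclp : IsClosed Hplus :=
    IsClosed.preimage (EuclideanSpace.proj (1 : Fin 2) : Eu 2 →L[ℝ] ℝ).continuous isClosed_Ici
  have hclm : IsClosed Hminus :=
    IsClosed.preimage (EuclideanSpace.proj (1 : Fin 2) : Eu 2 →L[ℝ] ℝ).continuous isClosed_Iic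
  -- the key scalar inequality
  have hkey : ∀ u₀ v₀ : ℝ, 0 ≤ 1 + u₀ * cp → 0 ≤ 1 - u₀ * cm → -cm ≤ v₀ → v₀ ≤ cp →
      0 ≤ 1 + u₀ * v₀ := by
    intro u₀ v₀ h1 h2 h3 h4
    rcases le_total 0 v₀ with h | h
    · rcases le_total 0 u₀ with h' | h'
      · nlinarith
      · nlinarith
    · rcases le_total 0 u₀ with h' | h'
      · nlinarith
      · nlinarith
  refine ⟨(h₁c.inter_right hclp).union (h₂c.inter_right hclm), ?_, ?_, ?_⟩
  · -- convexity
    intro x hx y hy a b ha hb hab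
    rcases hx with ⟨hx1, hxp⟩ | ⟨hx2, hxm⟩ <;> rcases hy with ⟨hy1, hyp⟩ | ⟨hy2, hym⟩
    · refine Or.inl ⟨h₁v hx1 hy1 ha hb hab, ?_⟩
      show 0 ≤ (a • x + b • y) 1
      rw [coords_comb]
      have hxp' : 0 ≤ x 1 := hxp
      have hyp' : 0 ≤ y 1 := hyp
      nlinarith
    · -- x ∈ L₁ ∩ H⁺, y ∈ L₂ ∩ H⁻
      have hxp' : 0 ≤ x 1 := hxp
      have hym' : y 1 ≤ 0 := hym
      rcases le_total 0 ((a • x + b • y) 1) with hz | hz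
      · refine Or.inl ⟨?_, hz⟩
        refine crossing 1 (Or.inl rfl) h₁v hax1 hx1 (hb1 x hx1).1 (hb1 x hx1).2
          (hb2 y hy2).1 (hb2 y hy2).2 (by linarith [hxp']) (by linarith [hym']) ha hb hab ?_
        rw [coords_comb] at hz
        linarith
      · refine Or.inr ⟨?_, hz⟩
        have h := crossing (-1) (Or.inr rfl) h₂v hax2 hy2 (hb2 y hy2).1 (hb2 y hy2).2
          (hb1 x hx1).1 (hb1 x hx1).2 (by linarith [hym']) (by linarith [hxp']) hb ha
          (by linarith) ?_
        · rw [add_comm] at h; exact h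
        · rw [coords_comb] at hz
          nlinarith
    · -- x ∈ L₂ ∩ H⁻, y ∈ L₁ ∩ H⁺
      have hxm' : x 1 ≤ 0 := hxm
      have hyp' : 0 ≤ y 1 := hyp
      rcases le_total 0 ((a • x + b • y) 1) with hz | hz
      · refine Or.inl ⟨?_, hz⟩
        have h := crossing 1 (Or.inl rfl) h₁v hax1 hy1 (hb1 y hy1).1 (hb1 y hy1).2
          (hb2 x hx2).1 (hb2 x hx2).2 (by linarith [hyp']) (by linarith [hxm']) hb ha
          (by linarith) ?_
        · rw [add_comm] at h; exact h
        · rw [coords_comb] at hz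
          nlinarith
      · refine Or.inr ⟨?_, hz⟩
        refine crossing (-1) (Or.inr rfl) h₂v hax2 hx2 (hb2 x hx2).1 (hb2 x hx2).2
          (hb1 y hy1).1 (hb1 y hy1).2 (by linarith [hxm']) (by linarith [hyp']) ha hb hab ?_
        rw [coords_comb] at hz
        nlinarith
    · refine Or.inr ⟨h₂v hx2 hy2 ha hb hab, ?_⟩
      show (a • x + b • y) 1 ≤ 0
      rw [coords_comb]
      have hxm' : x 1 ≤ 0 := hxm
      have hym' : y 1 ≤ 0 := hym
      nlinarith
  · -- interior
    have hsub : interior L₁ ∩ interior L₂ ⊆ (L₁ ∩ Hplus) ∪ (L₂ ∩ Hminus) := by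
      rintro p ⟨hp1, hp2⟩
      rcases le_total 0 (p 1) with h | h
      · exact Or.inl ⟨interior_subset hp1, h⟩
      · exact Or.inr ⟨interior_subset hp2, h⟩
    exact interior_maximal hsub (isOpen_interior.inter isOpen_interior) ⟨h₁0, h₂0⟩
  · -- dual set equality
    have hPL : cp • e₁ ∈ (L₁ ∩ Hplus) ∪ (L₂ ∩ Hminus) :=
      Or.inl ⟨hP1, le_of_eq (coords_smul cp).1.2.symm⟩
    have hQL : cm • (-e₁) ∈ (L₁ ∩ Hplus) ∪ (L₂ ∩ Hminus) :=
      Or.inl ⟨hQ1, le_of_eq (coords_smul cm).2.2.symm⟩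
    have hinP : ∀ u : Eu 2, ⟪u, cp • e₁⟫ = u 0 * cp := by
      intro u
      rw [inner_coords, (coords_smul cp).1.1, (coords_smul cp).1.2]
      ring
    have hinQ : ∀ u : Eu 2, ⟪u, cm • (-e₁)⟫ = -(u 0 * cm) := by
      intro u
      rw [inner_coords, (coords_smul cm).2.1, (coords_smul cm).2.2]
      ring
    ext u
    constructor
    · intro hu
      have hup : 0 ≤ 1 + u 0 * cp := by have := hu _ hPL; rwa [hinP] at this
      have hum : 0 ≤ 1 - u 0 * cm := by
        have := hu _ hQL; rw [hinQ] at this; linarith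
      rcases le_total 0 (u 1) with h | h
      · refine Or.inl ⟨?_, h⟩
        intro v hv2
        rcases le_total (v 1) 0 with hv | hv
        · exact hu v (Or.inr ⟨hv2, hv⟩)
        · rw [inner_coords]
          have hv0 := hb2 v hv2
          have := hkey (u 0) (v 0) hup hum hv0.1 hv0.2
          nlinarith [mul_nonneg h hv]
      · refine Or.inr ⟨?_, h⟩
        intro v hv1
        rcases le_total 0 (v 1) with hv | hv
        · exact hu v (Or.inl ⟨hv1, hv⟩)
        · rw [inner_coords]
          have hv0 := hb1 v hv1
          have := hkey (u 0) (v 0) hup hum hv0.1 hv0.2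
          nlinarith [mul_nonneg (neg_nonneg.2 h) (neg_nonneg.2 hv)]
    · intro hu
      rcases hu with ⟨hu2, huH⟩ | ⟨hu1, huH⟩
      · have huH' : 0 ≤ u 1 := huH
        have hup : 0 ≤ 1 + u 0 * cp := by have := hu2 _ hP2; rwa [hinP] at this
        have hum : 0 ≤ 1 - u 0 * cm := by
          have := hu2 _ hQ2; rw [hinQ] at this; linarith
        rintro v (⟨hv1, hvp⟩ | ⟨hv2, hvm⟩)
        · have hvp' : 0 ≤ v 1 := hvp
          rw [inner_coords]
          have hv0 := hb1 v hv1
          have := hkey (u 0) (v 0) hup hum hv0.1 hv0.2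
          nlinarith [mul_nonneg huH' hvp']
        · exact hu2 v hv2
      · have huH' : u 1 ≤ 0 := huH
        have hup : 0 ≤ 1 + u 0 * cp := by have := hu1 _ hP1; rwa [hinP] at this
        have hum : 0 ≤ 1 - u 0 * cm := by
          have := hu1 _ hQ1; rw [hinQ] at this; linarith
        rintro v (⟨hv1, hvp⟩ | ⟨hv2, hvm⟩)
        · exact hu1 v hv1
        · have hvm' : v 1 ≤ 0 := hvm
          rw [inner_coords]
          have hv0 := hb2 v hv2
          have := hkey (u 0) (v 0) hup hum hv0.1 hv0.2
          nlinarith [mul_nonneg (neg_nonneg.2 huH') (neg_nonneg.2 hvm')]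
end
end

section
/- For every planar self-dual convex body K there exists a rotation ψ ∈ SO(2) and λ ∈ ℝ such that ρ_{ψ(K)}(e₁) = h_{ψ(K)}(e₁) = e^λ and ρ_{ψ(K)}(−e₁) = h_{ψ(K)}(−e₁) = e^{−λ}. -/
open RealInnerProductSpace Set
open scoped ENNReal

noncomputable section

/-- every planar self-dual convex body can be rotated so that its radial
and support function in the directions `±e₁` are `e^{±λ}`. -/
theorem stmt8 (K : Set (Eu 2)) (hK : IsCompact K) (hconv : Convex ℝ K)
    (hsd : dualSet K = K) :
    ∃ ψ : Eu 2 ≃ₗᵢ[ℝ] Eu 2, LinearMap.det (ψ.toLinearEquiv : Eu 2 →ₗ[ℝ] Eu 2) = 1 ∧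
      ∃ l : ℝ, radial (ψ '' K) e₁ = Real.exp l ∧ supp (ψ '' K) e₁ = Real.exp l ∧
        radial (ψ '' K) (-e₁) = Real.exp (-l) ∧ supp (ψ '' K) (-e₁) = Real.exp (-l) := by
  -- 0 ∈ K
  have h0 : (0 : Eu 2) ∈ K := by
    rw [← hsd]; intro v hv; simp
  -- farthest point
  obtain ⟨x, hxK, hxmax⟩ := hK.exists_isMaxOn ⟨0, h0⟩ continuous_norm.continuousOn
  have hxmax' : ∀ y ∈ K, ‖y‖ ≤ ‖x‖ := fun y hy => hxmax hy
  have hx0 : x ≠ 0 := by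
    rintro rfl
    have hKsub : K = {0} := by
      apply subset_antisymm
      · intro y hy
        have := hxmax' y hy
        simp only [norm_zero] at this
        simpa [norm_le_zero_iff] using this
      · simpa using h0
    have : e₁ ∈ dualSet K := by
      intro v hv; rw [hKsub] at hv; simp at hv; simp [hv]
    rw [hsd, hKsub] at this
    simp only [mem_singleton_iff] at this
    replace this := congrArg (fun z : Eu 2 => z 0) this
    simp [e₁] at this
  set r : ℝ := ‖x‖ with hr
  have hrpos : 0 < r := norm_pos_iff.mpr hx0
  set u : Eu 2 := r⁻¹ • x with hu
  have hunorm : ‖u‖ = 1 := by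
    rw [hu, norm_smul, norm_inv, norm_norm, ← hr, inv_mul_cancel₀ hrpos.ne']
  have hru : r • u = x := by
    rw [hu, smul_smul, mul_inv_cancel₀ hrpos.ne', one_smul]
  -- A: ∀ y ∈ K, ⟪y, u⟫ ≤ r
  have hA : ∀ y ∈ K, ⟪y, u⟫ ≤ r := by
    intro y hy
    calc ⟪y, u⟫ ≤ ‖y‖ * ‖u‖ := real_inner_le_norm y u
    _ ≤ r * 1 := by
        apply mul_le_mul (hxmax' y hy) (le_of_eq hunorm) (norm_nonneg u) hrpos.le
    _ = r := mul_one r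
  -- B: ⟪x, u⟫ = r
  have hB : ⟪x, u⟫ = r := by
    rw [← hru, real_inner_smul_left, real_inner_self_eq_norm_sq, hunorm]
    ring
  -- D: ∀ y ∈ K, ⟪y, -u⟫ ≤ r⁻¹
  have hD : ∀ y ∈ K, ⟪y, -u⟫ ≤ r⁻¹ := by
    intro y hy
    have hyd := hy
    rw [← hsd] at hyd
    have := hyd x hxK
    rw [← hru, real_inner_smul_right] at this
    have h1 : -(r⁻¹) ≤ ⟪y, u⟫ := by
      nlinarith [hrpos, inv_pos.mpr hrpos, mul_inv_cancel₀ hrpos.ne']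
    rw [inner_neg_right]; linarith
  -- C: r⁻¹ • (-u) ∈ K
  have hC : r⁻¹ • (-u) ∈ K := by
    rw [← hsd]
    intro v hv
    have h1 : ⟪v, u⟫ ≤ r := hA v hv
    have : ⟪r⁻¹ • (-u), v⟫ = -(r⁻¹ * ⟪v, u⟫) := by
      rw [real_inner_smul_left, inner_neg_left, real_inner_comm]; ring
    rw [this]
    have : r⁻¹ * ⟪v, u⟫ ≤ r⁻¹ * r := by
      apply mul_le_mul_of_nonneg_left h1 (inv_pos.mpr hrpos).le
    rw [inv_mul_cancel₀ hrpos.ne'] at this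
    linarith
  -- four IsGreatest facts
  have hg1 : IsGreatest {l : ℝ | 0 ≤ l ∧ l • u ∈ K} r := by
    constructor
    · exact ⟨hrpos.le, hru ▸ hxK⟩
    · rintro l ⟨hl0, hlK⟩
      have := hxmax' _ hlK
      rwa [norm_smul, hunorm, mul_one, Real.norm_of_nonneg hl0] at this
  have hg2 : IsGreatest ((fun y => ⟪y, u⟫) '' K) r := by
    constructor
    · exact ⟨x, hxK, hB⟩
    · rintro b ⟨y, hy, rfl⟩; exact hA y hy
  have hg3 : IsGreatest {l : ℝ | 0 ≤ l ∧ l • (-u) ∈ K} r⁻¹ := by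
    constructor
    · exact ⟨(inv_pos.mpr hrpos).le, hC⟩
    · rintro l ⟨hl0, hlK⟩
      have := hD _ hlK
      rw [real_inner_smul_left, real_inner_self_eq_norm_sq, norm_neg, hunorm] at this
      nlinarith
  have hg4 : IsGreatest ((fun y => ⟪y, -u⟫) '' K) r⁻¹ := by
    constructor
    · refine ⟨r⁻¹ • (-u), hC, ?_⟩
      simp only [real_inner_smul_left, real_inner_self_eq_norm_sq, norm_neg, hunorm]
      ring
    · rintro b ⟨y, hy, rfl⟩; exact hD y hy
  -- rotation
  haveI : Fact (Module.finrank ℝ (Eu 2) = 2) := ⟨finrank_euclideanSpace_fin⟩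
  set o : Orientation ℝ (Eu 2) (Fin 2) := (EuclideanSpace.basisFun (Fin 2) ℝ).toBasis.orientation
  set ψ : Eu 2 ≃ₗᵢ[ℝ] Eu 2 := o.rotation (o.oangle u e₁) with hψdef
  have hψu : ψ u = e₁ := by
    rw [hψdef, o.rotation_oangle_eq_iff_norm_eq, hunorm, e₁,
      EuclideanSpace.norm_single, norm_one]
  refine ⟨ψ, o.det_rotation _, Real.log r, ?_, ?_, ?_, ?_⟩
  · rw [Real.exp_log hrpos, radial]
    have : {l : ℝ | 0 ≤ l ∧ l • e₁ ∈ ψ '' K} = {l : ℝ | 0 ≤ l ∧ l • u ∈ K} := by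
      ext l
      simp only [mem_setOf_eq, and_congr_right_iff]
      intro _
      rw [← hψu, ← map_smul ψ]
      exact ⟨fun h => by obtain ⟨y, hy, hey⟩ := h; rwa [← ψ.injective hey],
        fun h => ⟨l • u, h, rfl⟩⟩
    rw [this]; exact hg1.csSup_eq
  · rw [Real.exp_log hrpos, supp]
    have : (fun y => ⟪y, e₁⟫) '' (ψ '' K) = (fun y => ⟪y, u⟫) '' K := by
      rw [image_image]
      apply image_congr
      intro y _
      rw [← hψu, LinearIsometryEquiv.inner_map_map]
    rw [this]; exact hg2.csSup_eq
  · rw [← Real.log_inv, Real.exp_log (inv_pos.mpr hrpos), radial]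
    have : {l : ℝ | 0 ≤ l ∧ l • (-e₁) ∈ ψ '' K} = {l : ℝ | 0 ≤ l ∧ l • (-u) ∈ K} := by
      ext l
      simp only [mem_setOf_eq, and_congr_right_iff]
      intro _
      rw [← hψu, ← map_neg ψ, ← map_smul ψ]
      exact ⟨fun h => by obtain ⟨y, hy, hey⟩ := h; rwa [← ψ.injective hey],
        fun h => ⟨l • (-u), h, rfl⟩⟩
    rw [this]; exact hg3.csSup_eq
  · rw [← Real.log_inv, Real.exp_log (inv_pos.mpr hrpos), supp]
    have : (fun y => ⟪y, -e₁⟫) '' (ψ '' K) = (fun y => ⟪y, -u⟫) '' K := by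
      rw [image_image]
      apply image_congr
      intro y _
      rw [← hψu, ← map_neg ψ, LinearIsometryEquiv.inner_map_map]
    rw [this]; exact hg4.csSup_eq
end
end

section
/- Let K ⊆ ℝ² be a self-dual convex body and let u ∈ K be a point of maximal Euclidean norm in K, with v := u/|u|. Then ρ_K(v) = h_K(v) and ρ_K(−v) = h_K(−v) = 1/ρ_K(v). -/
open RealInnerProductSpace Set
open scoped ENNReal

noncomputable section

/-- in a planar self-dual convex body, a direction `v` of maximal norm
satisfies `ρ_K(v) = h_K(v)` and `ρ_K(-v) = h_K(-v) = 1/ρ_K(v)`. -/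
theorem stmt9 (K : Set (Eu 2)) (hK : IsCompact K) (hconv : Convex ℝ K)
    (hsd : dualSet K = K) (u : Eu 2) (hu : u ∈ K) (hmax : ∀ x ∈ K, ‖x‖ ≤ ‖u‖) :
    radial K (‖u‖⁻¹ • u) = supp K (‖u‖⁻¹ • u) ∧
    radial K (-(‖u‖⁻¹ • u)) = supp K (-(‖u‖⁻¹ • u)) ∧
    supp K (-(‖u‖⁻¹ • u)) = (radial K (‖u‖⁻¹ • u))⁻¹ := by
  have h0K : (0:Eu 2) ∈ K := by
    rw [← hsd]; intro y hy; simp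
  have hn : u ≠ 0 := by
    intro h
    have he : e₁ ∈ K := by
      rw [← hsd]
      intro y hy
      have hle : ‖y‖ ≤ ‖u‖ := hmax y hy
      rw [h, norm_zero] at hle
      have hy0 : y = 0 := norm_le_zero_iff.mp hle
      simp [hy0]
    have h2 := hmax e₁ he
    rw [h, norm_zero] at h2
    have h1 : ‖e₁‖ = 1 := by simp [e₁]
    linarith
  have hpos : 0 < ‖u‖ := norm_pos_iff.mpr hn
  set v := ‖u‖⁻¹ • u with hv
  have hnv : ‖v‖ = 1 := by
    rw [hv, norm_smul]; simp; field_simp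
  have hvu : ⟪v, u⟫ = ‖u‖ := by
    rw [hv, real_inner_smul_left, real_inner_self_eq_norm_sq]
    field_simp
  have hinner : ∀ x : Eu 2, ⟪x, v⟫ = ‖u‖⁻¹ * ⟪x, u⟫ := fun x => real_inner_smul_right x u _
  have hCS : ∀ x ∈ K, ⟪x, u⟫ ≤ ‖u‖ ^ 2 := by
    intro x hx
    calc ⟪x, u⟫ ≤ ‖x‖ * ‖u‖ := real_inner_le_norm x u
    _ ≤ ‖u‖ * ‖u‖ := by nlinarith [hmax x hx, norm_nonneg x]
    _ = ‖u‖ ^ 2 := (sq ‖u‖).symm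
  have hlow : ∀ x ∈ K, -1 ≤ ⟪x, u⟫ := by
    intro x hx
    have hx' : x ∈ dualSet K := by rw [hsd]; exact hx
    have := hx' u hu
    linarith
  have huvK : ‖u‖ • v = u := by
    rw [hv, smul_smul, mul_inv_cancel₀ hpos.ne', one_smul]
  -- the point -‖u‖⁻¹ • v is in K
  have hwK : (‖u‖⁻¹ • (-v)) ∈ K := by
    rw [← hsd]
    intro y hy
    have h1 : ⟪‖u‖⁻¹ • (-v), y⟫ = -(‖u‖⁻¹ * (‖u‖⁻¹ * ⟪u, y⟫)) := by
      rw [real_inner_smul_left, inner_neg_left, hv, real_inner_smul_left]; ring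
    rw [h1]
    have h2 : ⟪u, y⟫ ≤ ‖u‖ ^ 2 := by rw [real_inner_comm]; exact hCS y hy
    have h3 : ‖u‖⁻¹ * ‖u‖ = 1 := inv_mul_cancel₀ hpos.ne'
    nlinarith [inv_pos.mpr hpos, mul_le_mul_of_nonneg_left h2
      (by positivity : (0:ℝ) ≤ ‖u‖⁻¹ * ‖u‖⁻¹)]
  have hr1 : radial K v = ‖u‖ := by
    have hmem : ‖u‖ ∈ {l : ℝ | 0 ≤ l ∧ l • v ∈ K} := ⟨hpos.le, by rw [huvK]; exact hu⟩
    have hub : ∀ l ∈ {l : ℝ | 0 ≤ l ∧ l • v ∈ K}, l ≤ ‖u‖ := by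
      rintro l ⟨hl0, hlK⟩
      have := hmax _ hlK
      rw [norm_smul, hnv, mul_one, Real.norm_eq_abs, abs_of_nonneg hl0] at this
      exact this
    exact le_antisymm (csSup_le ⟨_, hmem⟩ hub) (le_csSup ⟨‖u‖, hub⟩ hmem)
  have hs1 : supp K v = ‖u‖ := by
    have hmem : ‖u‖ ∈ (fun x => ⟪x, v⟫) '' K :=
      ⟨u, hu, by simp only []; rw [real_inner_comm]; exact hvu⟩
    have hub : ∀ r ∈ (fun x => ⟪x, v⟫) '' K, r ≤ ‖u‖ := by
      rintro r ⟨x, hx, rfl⟩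
      have h2 := hCS x hx
      have h3 : ‖u‖⁻¹ * ‖u‖ = 1 := inv_mul_cancel₀ hpos.ne'
      simp only []; rw [hinner x]
      nlinarith [inv_pos.mpr hpos]
    exact le_antisymm (csSup_le ⟨_, hmem⟩ hub) (le_csSup ⟨‖u‖, hub⟩ hmem)
  have hr2 : radial K (-v) = ‖u‖⁻¹ := by
    have hmem : ‖u‖⁻¹ ∈ {l : ℝ | 0 ≤ l ∧ l • (-v) ∈ K} := ⟨(inv_pos.mpr hpos).le, hwK⟩
    have hub : ∀ l ∈ {l : ℝ | 0 ≤ l ∧ l • (-v) ∈ K}, l ≤ ‖u‖⁻¹ := by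
      rintro l ⟨hl0, hlK⟩
      have h1 := hlow _ hlK
      have h2 : ⟪l • (-v), u⟫ = -(l * ‖u‖) := by
        rw [real_inner_smul_left, inner_neg_left, hvu]; ring
      rw [h2] at h1
      have h3 : ‖u‖⁻¹ * ‖u‖ = 1 := inv_mul_cancel₀ hpos.ne'
      nlinarith [inv_pos.mpr hpos]
    exact le_antisymm (csSup_le ⟨_, hmem⟩ hub) (le_csSup ⟨‖u‖⁻¹, hub⟩ hmem)
  have hs2 : supp K (-v) = ‖u‖⁻¹ := by
    have hval : ⟪‖u‖⁻¹ • (-v), -v⟫ = ‖u‖⁻¹ := by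
      rw [real_inner_smul_left, inner_neg_neg, real_inner_self_eq_norm_sq, hnv]
      ring
    have hmem : ‖u‖⁻¹ ∈ (fun x => ⟪x, -v⟫) '' K := ⟨_, hwK, hval⟩
    have hub : ∀ r ∈ (fun x => ⟪x, -v⟫) '' K, r ≤ ‖u‖⁻¹ := by
      rintro r ⟨x, hx, rfl⟩
      have h1 := hlow x hx
      have h2 : ⟪x, -v⟫ = -(‖u‖⁻¹ * ⟪x, u⟫) := by
        rw [inner_neg_right, hinner x]
      simp only []; rw [h2]
      nlinarith [inv_pos.mpr hpos]
    exact le_antisymm (csSup_le ⟨_, hmem⟩ hub) (le_csSup ⟨‖u‖⁻¹, hub⟩ hmem)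
  exact ⟨by rw [hr1, hs1], by rw [hr2, hs2], by rw [hs2, hr1]⟩
end
end

section
/- Let C ⊆ ℝ^n be a convex set and let F be a nonempty face of C. Then the normal cones satisfy ⋂_{x∈F} N(x) = N(y) for any y in the relative interior of F; in particular the intersection ⋂_{x∈F} N(x) is itself a normal cone of C. -/
open RealInnerProductSpace Set
open scoped ENNReal

noncomputable section

lemma extend_in_face {n : ℕ} {F : Set (Eu n)} {x y : Eu n} (hx : x ∈ F)
    (hy : y ∈ intrinsicInterior ℝ F) : ∃ ε : ℝ, 0 < ε ∧ ε • (y - x) + y ∈ F := by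
  obtain ⟨z, hz, rfl⟩ := mem_intrinsicInterior.mp hy
  obtain ⟨r, hr, hball⟩ := Metric.isOpen_iff.mp isOpen_interior z hz
  set ε : ℝ := r / (2 * (‖(z : Eu n) - x‖ + 1)) with hε
  have hnorm : (0:ℝ) ≤ ‖(z : Eu n) - x‖ := norm_nonneg _
  have hεpos : 0 < ε := by positivity
  have hmem : ε • ((z : Eu n) - x) + (z : Eu n) ∈ affineSpan ℝ F := by
    have := AffineSubspace.smul_vsub_vadd_mem (affineSpan ℝ F) ε z.2
      (subset_affineSpan ℝ F hx) z.2
    simpa [vsub_eq_sub, vadd_eq_add] using this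
  refine ⟨ε, hεpos, ?_⟩
  have hb : (⟨_, hmem⟩ : affineSpan ℝ F) ∈ Metric.ball z r := by
    rw [Metric.mem_ball, Subtype.dist_eq, dist_eq_norm]
    have : (ε • ((z : Eu n) - x) + (z : Eu n)) - (z : Eu n) = ε • ((z : Eu n) - x) := by abel
    rw [this, norm_smul, Real.norm_eq_abs, abs_of_pos hεpos]
    have h1 : ε * ‖(z : Eu n) - x‖ ≤ r / 2 := by
      rw [hε, div_mul_eq_mul_div, div_le_div_iff₀ (by positivity) (by norm_num)]
      nlinarith
    linarith
  exact interior_subset (s := (Subtype.val ⁻¹' F : Set (affineSpan ℝ F))) (hball hb)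

/-- the intersection of the normal cones over a nonempty face equals the
normal cone at any relative interior point of the face. -/
theorem stmt10 {n : ℕ} (C F : Set (Eu n)) (hC : Convex ℝ C) (hF : IsFace C F)
    (hne : F.Nonempty) (y : Eu n) (hy : y ∈ intrinsicInterior ℝ F) :
    (⋂ x ∈ F, normalCone C x) = normalCone C y := by
  ext u
  simp only [mem_iInter]
  constructor
  · intro h
    exact h y (intrinsicInterior_subset hy)
  · intro hu x hx
    intro z hz
    obtain ⟨ε, hεpos, hmem⟩ := extend_in_face hx hy
    have h1 : ⟪u, (ε • (y - x) + y) - y⟫ ≤ 0 := hu _ (hF.1 hmem)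
    have h1' : ε * ⟪u, y - x⟫ ≤ 0 := by
      have e : (ε • (y - x) + y) - y = ε • (y - x) := by abel
      rw [e, real_inner_smul_right] at h1
      exact h1
    have h2 : ⟪u, y - x⟫ ≤ 0 := nonpos_of_mul_nonpos_right (by linarith [mul_comm ε ⟪u, y - x⟫]) hεpos
    have h3 : ⟪u, z - y⟫ ≤ 0 := hu z hz
    have e2 : z - x = (z - y) + (y - x) := by abel
    rw [e2, inner_add_right]
    linarith
end
end

section
/- Let C ⊆ ℝ^n be a convex set, x ∈ C, and y a point in the relative interior of a face F of C with x ∈ F. Then N(y) ⊆ N(x). -/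
open RealInnerProductSpace Set
open scoped ENNReal

noncomputable section

/-- if `y` is in the relative interior of a face `F` containing `x`, then
`N(y) ⊆ N(x)`. -/
theorem stmt11 {n : ℕ} (C F : Set (Eu n)) (hC : Convex ℝ C) (hF : IsFace C F)
    (x : Eu n) (hx : x ∈ C) (hxF : x ∈ F)
    (y : Eu n) (hy : y ∈ intrinsicInterior ℝ F) :
    normalCone C y ⊆ normalCone C x := by
  intro u hu
  obtain ⟨yy, hyyint, hyy⟩ := hy
  have hyF : y ∈ F := hyy ▸ (interior_subset hyyint : yy ∈ Subtype.val ⁻¹' F)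
  have hFC : F ⊆ C := hF.1
  have hxS : x ∈ affineSpan ℝ F := subset_affineSpan ℝ F hxF
  have hyS : y ∈ affineSpan ℝ F := hyy ▸ yy.2
  -- define the line t ↦ t•(y-x) + y inside the affine span
  have hmem : ∀ t : ℝ, t • (y - x) + y ∈ affineSpan ℝ F := fun t =>
    AffineSubspace.smul_vsub_vadd_mem _ t hyS hxS hyS
  set g : ℝ → affineSpan ℝ F := fun t => ⟨t • (y - x) + y, hmem t⟩ with hg
  have hgc : Continuous g := by
    apply Continuous.subtype_mk
    exact (continuous_id.smul continuous_const).add continuous_const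
  have hg0 : g 0 = yy := by
    apply Subtype.ext
    simp [hg, hyy]
  -- find ε > 0 with g ε ∈ preimage F
  have hopen : IsOpen (g ⁻¹' interior (((↑) : affineSpan ℝ F → Eu n) ⁻¹' F)) :=
    isOpen_interior.preimage hgc
  have h0 : (0 : ℝ) ∈ g ⁻¹' interior (((↑) : affineSpan ℝ F → Eu n) ⁻¹' F) := by
    rw [Set.mem_preimage, hg0]; exact hyyint
  obtain ⟨δ, hδpos, hδ⟩ := Metric.isOpen_iff.1 hopen 0 h0
  set ε : ℝ := δ / 2 with hε
  have hεpos : 0 < ε := by positivity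
  have hεball : ε ∈ Metric.ball (0 : ℝ) δ := by
    rw [Metric.mem_ball, Real.dist_eq, sub_zero, abs_of_pos hεpos]
    linarith
  have hzF : ε • (y - x) + y ∈ F := by
    have h3 : g ε ∈ Subtype.val ⁻¹' F := interior_subset (hδ hεball)
    exact h3
  -- from u ∈ N(y), get ⟪u, y - x⟫ ≤ 0
  have key : ⟪u, y - x⟫ ≤ 0 := by
    have := hu _ (hFC hzF)
    have h1 : ε • (y - x) + y - y = ε • (y - x) := by abel
    rw [h1, real_inner_smul_right] at this
    nlinarith
  intro z hz
  have h2 : z - x = (z - y) + (y - x) := by abel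
  rw [h2, inner_add_right]
  have := hu z hz
  linarith
end
end

section
/- Let K ⊆ ℝ^n be a convex body with 0 ∈ int(K) and let F be a nonempty face of K with y ∈ ri(F). Then the normal cone N(y) equals the positive hull of the conjugate face: N(y) = pos(C_K(F)), where C_K(F) = {v ∈ K° | ⟨v,u⟩ = 1 ∀ u ∈ F}. -/
open RealInnerProductSpace Set
open scoped ENNReal

noncomputable section

lemma extend_lemma {n : ℕ} {F : Set (Eu n)} {y : Eu n} (hy : y ∈ intrinsicInterior ℝ F)
    {u' : Eu n} (hu' : u' ∈ F) :
    ∃ z ∈ F, ∃ a b : ℝ, 0 < a ∧ 0 < b ∧ a + b = 1 ∧ a • u' + b • z = y := by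
  obtain ⟨y', hy', hyy⟩ := hy
  have hu's : u' ∈ affineSpan ℝ F := subset_affineSpan ℝ F hu'
  have hmem : ∀ t : ℝ, u' + t • ((y' : Eu n) - u') ∈ affineSpan ℝ F := by
    intro t
    have := (affineSpan ℝ F).smul_vsub_vadd_mem t y'.2 hu's hu's
    simpa [vsub_eq_sub, vadd_eq_add, add_comm] using this
  set γ : ℝ → affineSpan ℝ F := fun t => ⟨u' + t • ((y' : Eu n) - u'), hmem t⟩ with hγ
  have hcont : Continuous γ := by
    apply Continuous.subtype_mk
    fun_prop
  have hγ1 : γ 1 = y' := by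
    ext1
    simp [γ]
  have hopen : IsOpen (γ ⁻¹' interior ((↑) ⁻¹' F : Set (affineSpan ℝ F))) :=
    isOpen_interior.preimage hcont
  have h1mem : (1:ℝ) ∈ γ ⁻¹' interior ((↑) ⁻¹' F) := by
    simp only [mem_preimage, hγ1]; exact hy'
  obtain ⟨ε, hε, hball⟩ := Metric.isOpen_iff.mp hopen 1 h1mem
  set t : ℝ := 1 + ε/2 with ht
  have htmem : t ∈ γ ⁻¹' interior ((↑) ⁻¹' F) := by
    apply hball
    simp only [Metric.mem_ball, ht, Real.dist_eq]
    rw [abs_of_nonneg (by linarith)]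
    linarith
  have ht1 : 1 < t := by simp [ht]; linarith
  have htpos : 0 < t := by linarith
  have hzF : u' + t • ((y' : Eu n) - u') ∈ F := by
    have : γ t ∈ (Subtype.val ⁻¹' F : Set (affineSpan ℝ F)) := interior_subset htmem
    exact this
  refine ⟨_, hzF, 1 - t⁻¹, t⁻¹, ?_, inv_pos.mpr htpos, by ring, ?_⟩
  · have : t⁻¹ < 1 := by
      rw [inv_lt_one_iff₀]; right; exact ht1
    linarith
  · rw [← hyy]
    have htne : t ≠ 0 := ne_of_gt htpos
    match_scalars <;> field_simp <;> ring

/-- the normal cone of a nonempty face equals the positive hull of its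
conjugate face. -/
theorem stmt12 {n : ℕ} (K F : Set (Eu n)) (hK : IsCompact K) (hconv : Convex ℝ K)
    (h0 : (0 : Eu n) ∈ interior K) (hF : IsFace K F) (hne : F.Nonempty)
    (y : Eu n) (hy : y ∈ intrinsicInterior ℝ F) :
    normalCone K y = posHull (conjFace K F) := by

  ext u
  simp only [normalCone, posHull, conjFace, polarSet, mem_setOf_eq]
  have hyF : y ∈ F := intrinsicInterior_subset hy
  have hyK : y ∈ K := hF.1 hyF
  constructor
  · intro hu
    by_cases hu0 : u = 0
    · exact Or.inl hu0
    right
    have hxle : ∀ x ∈ K, ⟪u, x⟫ ≤ ⟪u, y⟫ := by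
      intro x hx
      have := hu x hx
      rw [inner_sub_right] at this
      linarith
    obtain ⟨ε, hε, hball⟩ := Metric.mem_nhds_iff.mp (mem_interior_iff_mem_nhds.mp h0)
    have hcpos : 0 < ⟪u, y⟫ := by
      set x0 : Eu n := (ε / (2 * ‖u‖)) • u with hx0
      have hupos : 0 < ‖u‖ := norm_pos_iff.mpr hu0
      have hx0K : x0 ∈ K := by
        apply hball
        simp only [Metric.mem_ball, dist_zero_right, hx0, norm_smul, Real.norm_eq_abs]
        rw [abs_of_nonneg (by positivity)]
        rw [div_mul_eq_mul_div, mul_comm]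
        rw [div_lt_iff₀ (by positivity)]
        nlinarith
      have h1 : ⟪u, x0⟫ ≤ ⟪u, y⟫ := hxle x0 hx0K
      have h2 : ⟪u, x0⟫ = (ε / (2 * ‖u‖)) * ‖u‖^2 := by
        rw [hx0, real_inner_smul_right, real_inner_self_eq_norm_sq]
      have : 0 < (ε / (2 * ‖u‖)) * ‖u‖^2 := by positivity
      linarith
    set c := ⟪u, y⟫ with hc
    set v : Eu n := c⁻¹ • u with hv
    have hvx : ∀ x : Eu n, ⟪v, x⟫ = c⁻¹ * ⟪u, x⟫ := fun x => real_inner_smul_left u x c⁻¹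
    have hvpolar : ∀ x ∈ K, ⟪v, x⟫ ≤ 1 := by
      intro x hx
      rw [hvx]
      rw [inv_mul_le_iff₀ hcpos, mul_one]
      exact hxle x hx
    have hvy : ⟪v, y⟫ = 1 := by
      rw [hvx, ← hc, inv_mul_cancel₀ (ne_of_gt hcpos)]
    refine ⟨c, le_of_lt hcpos, v, ⟨hvpolar, ?_⟩, ?_⟩
    · intro u' hu'
      obtain ⟨z, hz, a, b, ha, hb, hab, hcomb⟩ := extend_lemma hy hu'
      have hsum : a * ⟪v, u'⟫ + b * ⟪v, z⟫ = 1 := by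
        rw [← real_inner_smul_right, ← real_inner_smul_right, ← inner_add_right, hcomb, hvy]
      have h1 : ⟪v, u'⟫ ≤ 1 := hvpolar u' (hF.1 hu')
      have h2 : ⟪v, z⟫ ≤ 1 := hvpolar z (hF.1 hz)
      nlinarith [mul_le_mul_of_nonneg_left h1 ha.le, mul_le_mul_of_nonneg_left h2 hb.le]
    · rw [hv, smul_smul, mul_inv_cancel₀ (ne_of_gt hcpos), one_smul]
  · rintro (rfl | ⟨l, hl, v, ⟨hvpolar, hvF⟩, rfl⟩)
    · intro x hx
      simp
    · intro x hx
      rw [real_inner_smul_left]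
      have h1 : ⟪v, x - y⟫ ≤ 0 := by
        rw [inner_sub_right, hvF y hyF]
        have := hvpolar x hx
        linarith
      exact mul_nonpos_of_nonneg_of_nonpos hl h1
end
end

section
/- Let K ⊆ ℝ^n be a convex body with 0 ∈ int(K). For every face F of K, the double conjugate C_{K°}(C_K(F)) equals the exposed closure of F, i.e. the intersection of all exposed faces of K containing F. -/
open RealInnerProductSpace Set
open scoped ENNReal

noncomputable section

section Aux

variable {n : ℕ}

lemma bddA {K : Set (Eu n)} (hK : IsCompact K) (u : Eu n) :
    BddAbove ((fun x => ⟪x, u⟫) '' K) :=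
  (hK.image (continuous_id.inner continuous_const)).bddAbove

lemma le_supp {K : Set (Eu n)} (hK : IsCompact K) {y u : Eu n} (hy : y ∈ K) :
    ⟪y, u⟫ ≤ supp K u := le_csSup (bddA hK u) ⟨y, hy, rfl⟩

lemma supp_le {K : Set (Eu n)} (hne : K.Nonempty) {u : Eu n} {c : ℝ}
    (h : ∀ y ∈ K, ⟪y, u⟫ ≤ c) : supp K u ≤ c :=
  csSup_le (hne.image _) (by rintro _ ⟨y, hy, rfl⟩; exact h y hy)

lemma supp_pos {K : Set (Eu n)} (hK : IsCompact K) (h0 : (0 : Eu n) ∈ interior K)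
    {u : Eu n} (hu : u ≠ 0) : 0 < supp K u := by
  obtain ⟨ε, hε, hball⟩ := Metric.isOpen_iff.1 isOpen_interior 0 h0
  have hun : 0 < ‖u‖ := norm_pos_iff.2 hu
  set x := (ε / (2 * ‖u‖)) • u with hx
  have hxK : x ∈ K := by
    apply interior_subset (hball ?_)
    simp only [Metric.mem_ball, dist_zero_right, hx, norm_smul, Real.norm_eq_abs]
    rw [abs_of_pos (by positivity), div_mul_eq_mul_div, mul_comm]
    calc ‖u‖ * ε / (2 * ‖u‖) = ε / 2 := by field_simp
    _ < ε := by linarith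
  have : (0:ℝ) < ⟪x, u⟫ := by
    rw [hx, real_inner_smul_left, real_inner_self_eq_norm_sq]
    positivity
  exact this.trans_le (le_supp hK hxK)

lemma bipolar {K : Set (Eu n)} (hcl : IsClosed K) (hconv : Convex ℝ K)
    (h0 : (0 : Eu n) ∈ K) : polarSet (polarSet K) ⊆ K := by
  intro x hx
  by_contra hxK
  obtain ⟨f, c, hfK, hcx⟩ := geometric_hahn_banach_closed_point hconv hcl hxK
  set v := (InnerProductSpace.toDual ℝ (Eu n)).symm f with hv
  have hfv : ∀ z : Eu n, f z = ⟪v, z⟫ := fun z =>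
    (InnerProductSpace.toDual_symm_apply).symm
  have hc : 0 < c := by have := hfK 0 h0; simpa using this
  have hw : c⁻¹ • v ∈ polarSet K := by
    intro y hy
    rw [real_inner_smul_left]
    have h1 : ⟪v, y⟫ < c := by rw [← hfv]; exact hfK y hy
    calc c⁻¹ * ⟪v, y⟫ ≤ c⁻¹ * c := by
          exact mul_le_mul_of_nonneg_left h1.le (by positivity)
    _ = 1 := inv_mul_cancel₀ hc.ne'
  have := hx _ hw
  rw [real_inner_smul_right] at this
  have h2 : c < ⟪v, x⟫ := by rw [← hfv]; exact hcx
  have h3 : (1:ℝ) < c⁻¹ * ⟪x, v⟫ := by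
    rw [real_inner_comm]
    calc (1:ℝ) = c⁻¹ * c := (inv_mul_cancel₀ hc.ne').symm
    _ < c⁻¹ * ⟪v, x⟫ := by
        exact (mul_lt_mul_iff_right₀ (by positivity)).2 h2
  linarith

end Aux

/-- the double conjugate of a face equals its exposed closure, the
intersection of all exposed faces containing it. -/
theorem stmt14 {n : ℕ} (K : Set (Eu n)) (hK : IsCompact K) (hconv : Convex ℝ K)
    (h0 : (0 : Eu n) ∈ interior K) (F : Set (Eu n)) (hF : IsFace K F) :
    conjFace (polarSet K) (conjFace K F) = ⋂₀ {G | IsExposedFace K G ∧ F ⊆ G} := by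
  have hcl : IsClosed K := hK.isClosed
  have h0K : (0 : Eu n) ∈ K := interior_subset h0
  ext x
  simp only [conjFace, mem_setOf_eq, mem_sInter]
  constructor
  · rintro ⟨hx1, hx2⟩ G ⟨hGexp, hFG⟩
    rcases F.eq_empty_or_nonempty with rfl | ⟨u₀, hu₀⟩
    · exfalso
      have h0p : (0 : Eu n) ∈ polarSet K := by
        intro y hy; simp
      have := hx2 0 ⟨h0p, fun u hu => absurd hu (notMem_empty u)⟩
      simp at this
    · have hxK : x ∈ K := bipolar hcl hconv h0K hx1
      rcases hGexp with rfl | rfl | ⟨u, hu, rfl⟩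
      · exact absurd (hFG hu₀) (notMem_empty u₀)
      · exact hxK
      · have hpos : 0 < supp K u := supp_pos hK h0 hu
        have hvK : (supp K u)⁻¹ • u ∈ polarSet K := by
          intro y hy
          rw [real_inner_smul_left, real_inner_comm]
          calc (supp K u)⁻¹ * ⟪y, u⟫ ≤ (supp K u)⁻¹ * supp K u :=
                mul_le_mul_of_nonneg_left (le_supp hK hy) (by positivity)
          _ = 1 := inv_mul_cancel₀ hpos.ne'
        have hvF : ∀ w ∈ F, ⟪(supp K u)⁻¹ • u, w⟫ = 1 := by
          intro w hw
          obtain ⟨-, hw2⟩ := hFG hw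
          rw [real_inner_smul_left, real_inner_comm, hw2]
          exact inv_mul_cancel₀ hpos.ne'
        have := hx2 _ ⟨hvK, hvF⟩
        rw [real_inner_smul_right] at this
        refine ⟨hxK, ?_⟩
        have h2 : supp K u * ((supp K u)⁻¹ * ⟪x, u⟫) = supp K u * 1 := by rw [this]
        rwa [← mul_assoc, mul_inv_cancel₀ hpos.ne', one_mul, mul_one] at h2
  · intro hx
    have hxK : x ∈ K := hx K ⟨Or.inr (Or.inl rfl), hF.1⟩
    have hxpp : x ∈ polarSet (polarSet K) := by
      intro v hv
      rw [real_inner_comm]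
      exact hv x hxK
    refine ⟨hxpp, ?_⟩
    intro v hv
    rcases F.eq_empty_or_nonempty with rfl | ⟨u₀, hu₀⟩
    · exact absurd (hx ∅ ⟨Or.inl rfl, Subset.rfl⟩) (notMem_empty x)
    · obtain ⟨hvp, hvF⟩ := hv
      have hv1 : ⟪v, u₀⟫ = 1 := hvF u₀ hu₀
      have hvne : v ≠ 0 := by
        rintro rfl
        simp at hv1
      have hsupp : supp K v = 1 := by
        refine le_antisymm (supp_le ⟨0, h0K⟩ ?_) ?_
        · intro y hy; rw [real_inner_comm]; exact hvp y hy
        · rw [← hv1, real_inner_comm]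
          exact le_supp hK (hF.1 hu₀)
      have hGe : IsExposedFace K {y ∈ K | ⟪y, v⟫ = supp K v} :=
        Or.inr (Or.inr ⟨v, hvne, rfl⟩)
      have hFsub : F ⊆ {y ∈ K | ⟪y, v⟫ = supp K v} := by
        intro w hw
        refine ⟨hF.1 hw, ?_⟩
        rw [hsupp, real_inner_comm]
        exact hvF w hw
      have := hx _ ⟨hGe, hFsub⟩
      rw [this.2, hsupp]
end
end

section
/- Let K ⊆ ℝ² be a convex body. Every non-exposed point x of K is a smooth extreme point (its normal cone is a ray, dim N(x) = 1) and is incident with exactly one segment (one-dimensional face) of K. Conversely, every smooth extreme point incident with a unique segment of K is a non-exposed point. -/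
open RealInnerProductSpace Set
open scoped ENNReal

noncomputable section

section Helpers
variable {K s : Set (Eu 2)} {x u w a b v y : Eu 2}

lemma bddAbove_inner (hK : IsCompact K) (u : Eu 2) :
    BddAbove ((fun y => ⟪y, u⟫) '' K) :=
  (hK.image (continuous_id.inner continuous_const)).bddAbove

lemma inner_le_of_normal (hu : u ∈ normalCone K x) (hy : y ∈ K) : ⟪y, u⟫ ≤ ⟪x, u⟫ := by
  have h := hu y hy
  rw [inner_sub_right, real_inner_comm y u, real_inner_comm x u] at h
  linarith

lemma supp_eq_of_normal (hxK : x ∈ K) (hu : u ∈ normalCone K x) :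
    supp K u = ⟪x, u⟫ := by
  have hub : ∀ z ∈ (fun y => ⟪y, u⟫) '' K, z ≤ ⟪x, u⟫ := by
    rintro _ ⟨y, hy, rfl⟩
    exact inner_le_of_normal hu hy
  refine le_antisymm (csSup_le ⟨⟪x, u⟫, ⟨x, hxK, rfl⟩⟩ hub) ?_
  exact le_csSup ⟨⟪x, u⟫, hub⟩ ⟨x, hxK, rfl⟩

lemma isFace_exposed (hK : IsCompact K) (hconv : Convex ℝ K) (u : Eu 2) :
    IsFace K {y ∈ K | ⟪y, u⟫ = supp K u} := by
  refine ⟨fun y hy => hy.1, ?_, ?_⟩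
  · rintro y₁ ⟨h₁K, h₁⟩ y₂ ⟨h₂K, h₂⟩ α β hα hβ hαβ
    refine ⟨hconv h₁K h₂K hα hβ hαβ, ?_⟩
    rw [inner_add_left, real_inner_smul_left, real_inner_smul_left, h₁, h₂,
      ← add_mul, hαβ, one_mul]
  · rintro p hp z hz y ⟨hyK, hy⟩ ⟨α, β, hα, hβ, hαβ, rfl⟩
    have hpl : ⟪p, u⟫ ≤ supp K u := le_csSup (bddAbove_inner hK u) ⟨p, hp, rfl⟩
    have hzl : ⟪z, u⟫ ≤ supp K u := le_csSup (bddAbove_inner hK u) ⟨z, hz, rfl⟩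
    rw [inner_add_left, real_inner_smul_left, real_inner_smul_left] at hy
    have hsum : α * supp K u + β * supp K u = supp K u := by rw [← add_mul, hαβ, one_mul]
    have hps : ⟪p, u⟫ = supp K u := by
      by_contra hne
      have hlt : ⟪p, u⟫ < supp K u := lt_of_le_of_ne hpl hne
      have h1 : α * ⟪p, u⟫ < α * supp K u := mul_lt_mul_of_pos_left hlt hα
      have h2 : β * ⟪z, u⟫ ≤ β * supp K u := mul_le_mul_of_nonneg_left hzl hβ.le
      linarith
    have hzs : ⟪z, u⟫ = supp K u := by
      by_contra hne
      have hlt : ⟪z, u⟫ < supp K u := lt_of_le_of_ne hzl hne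
      have h1 : β * ⟪z, u⟫ < β * supp K u := mul_lt_mul_of_pos_left hlt hβ
      have h2 : α * ⟪p, u⟫ ≤ α * supp K u := mul_le_mul_of_nonneg_left hpl hα.le
      linarith
    exact ⟨⟨hp, hps⟩, ⟨hz, hzs⟩⟩

lemma face_lineMap_mem (hs : IsFace K s) (ha : a ∈ s) (hb : b ∈ s) {t : ℝ}
    (hy : a + t • (b - a) ∈ K) : a + t • (b - a) ∈ s := by
  have hm : a + (2⁻¹ : ℝ) • (b - a) ∈ s := by
    have h := hs.2.1 ha hb (by norm_num : (0:ℝ) ≤ 2⁻¹) (by norm_num : (0:ℝ) ≤ 2⁻¹) (by norm_num)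
    have e : (2⁻¹ : ℝ) • a + (2⁻¹ : ℝ) • b = a + (2⁻¹ : ℝ) • (b - a) := by module
    rwa [e] at h
  rcases lt_trichotomy t (2⁻¹ : ℝ) with h | h | h
  · have ht1 : (0:ℝ) < 1 - t := by norm_num at h ⊢; linarith
    set θ : ℝ := (2⁻¹ - t) / (1 - t) with hθdef
    have hθ1 : (0:ℝ) < θ := div_pos (by norm_num at h ⊢; linarith) ht1
    have hθ2 : θ < 1 := by rw [hθdef, div_lt_one ht1]; linarith
    refine (hs.2.2 _ hy b (hs.1 hb) _ hm ?_).1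
    refine ⟨1 - θ, θ, by linarith, hθ1, by ring, ?_⟩
    have hc : (1 - θ) * t + θ * 1 = 2⁻¹ := by
      rw [hθdef]; field_simp; ring
    rw [← hc]
    module
  · rw [← h] at hm; exact hm
  · have ht0 : (0:ℝ) < t := by norm_num at h ⊢; linarith
    have hθ1 : (0:ℝ) < 2⁻¹ / t := by positivity
    have hθ2 : 2⁻¹ / t < 1 := by rw [div_lt_one ht0]; exact h
    refine (hs.2.2 a (hs.1 ha) _ hy _ hm ?_).2
    set θ : ℝ := 2⁻¹ / t with hθdef
    refine ⟨1 - θ, θ, by linarith, hθ1, by ring, ?_⟩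
    have hc : (1 - θ) * 0 + θ * t = 2⁻¹ := by
      rw [hθdef]; field_simp; ring
    rw [← hc]
    module

lemma exists_pair_of_dim_one (hsd : Module.finrank ℝ (affineSpan ℝ s).direction = 1) :
    ∃ a ∈ s, ∃ b ∈ s, a ≠ b := by
  by_contra h
  push_neg at h
  have hv : vectorSpan ℝ s = ⊥ := by
    rw [vectorSpan_def]
    refine le_bot_iff.1 (Submodule.span_le.2 ?_)
    intro v hv
    rw [Set.mem_vsub] at hv
    obtain ⟨p, hp, q, hq, rfl⟩ := hv
    have := h p hp q hq
    simp [this]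
  rw [direction_affineSpan, hv] at hsd
  simp at hsd

lemma finrank_orth (hv : v ≠ 0) : Module.finrank ℝ (Submodule.span ℝ {v})ᗮ = 1 := by
  have h := Submodule.finrank_add_finrank_orthogonal (Submodule.span ℝ {v})
  rw [finrank_span_singleton hv, finrank_euclideanSpace_fin] at h
  omega

lemma orth_eq (hv : v ≠ 0) (hw : w ≠ 0) (hvw : ⟪v, w⟫ = 0) :
    (Submodule.span ℝ {v})ᗮ = Submodule.span ℝ {w} := by
  symm
  apply Submodule.eq_of_le_of_finrank_eq
  · rw [Submodule.span_le, Set.singleton_subset_iff]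
    rw [SetLike.mem_coe, Submodule.mem_orthogonal_singleton_iff_inner_left]
    rw [real_inner_comm]; exact hvw
  · rw [finrank_span_singleton hw, finrank_orth hv]

lemma exists_orth (hv : v ≠ 0) : ∃ w : Eu 2, w ≠ 0 ∧ ⟪v, w⟫ = 0 := by
  have h1 := finrank_orth hv
  have hne : (Submodule.span ℝ {v})ᗮ ≠ ⊥ := by
    intro h; rw [h] at h1; simp at h1
  obtain ⟨w, hw, hw0⟩ := Submodule.exists_mem_ne_zero_of_ne_bot hne
  rw [Submodule.mem_orthogonal_singleton_iff_inner_left] at hw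
  exact ⟨w, hw0, by rw [real_inner_comm]; exact hw⟩

end Helpers

section Core
variable {K s : Set (Eu 2)} {x u w a b v y : Eu 2}

lemma line_inner (a : Eu 2) (t : ℝ) (d w : Eu 2) (hd : ⟪d, w⟫ = 0) :
    ⟪a + t • d, w⟫ = ⟪a, w⟫ := by
  rw [inner_add_left, real_inner_smul_left, hd, mul_zero, add_zero]

lemma no_cross (hKcv : Convex ℝ K) (hs : IsFace K s) (ha : a ∈ s) (hb : b ∈ s) (hab : a ≠ b)
    {w : Eu 2} (hw0 : w ≠ 0) (hw : ⟪b - a, w⟫ = 0)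
    (hline : ∀ y ∈ s, ∃ t : ℝ, y = a + t • (b - a))
    {p q : Eu 2} (hp : p ∈ K) (hq : q ∈ K)
    (hpw : ⟪a, w⟫ < ⟪p, w⟫) (hqw : ⟪q, w⟫ < ⟪a, w⟫) : False := by
  have hba : b - a ≠ 0 := sub_ne_zero.2 (Ne.symm hab)
  have hsum : (0:ℝ) < (⟪p, w⟫ - ⟪a, w⟫) + (⟪a, w⟫ - ⟪q, w⟫) := by linarith
  set τ : ℝ := (⟪p, w⟫ - ⟪a, w⟫) / ((⟪p, w⟫ - ⟪a, w⟫) + (⟪a, w⟫ - ⟪q, w⟫)) with hτdef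
  have hτ0 : 0 < τ := div_pos (by linarith) hsum
  have hτ1 : τ < 1 := by
    rw [hτdef, div_lt_one hsum]; linarith
  set r : Eu 2 := (1 - τ) • p + τ • q with hrdef
  have hrK : r ∈ K := hKcv hp hq (by linarith) hτ0.le (by ring)
  have hrw : ⟪r, w⟫ = ⟪a, w⟫ := by
    have key : ∀ P A Q : ℝ, Q < A → A < P →
        (1 - (P - A) / ((P - A) + (A - Q))) * P + ((P - A) / ((P - A) + (A - Q))) * Q = A := by
      intro P A Q h1 h2
      have hne : (P - A) + (A - Q) ≠ 0 := by linarith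
      field_simp
      ring
    rw [hrdef, inner_add_left, real_inner_smul_left, real_inner_smul_left, hτdef]
    exact key _ _ _ hqw hpw
  -- r lies on the line through a, b
  have hmem : r - a ∈ (Submodule.span ℝ {w})ᗮ := by
    rw [Submodule.mem_orthogonal_singleton_iff_inner_left, inner_sub_left, hrw, sub_self]
  rw [orth_eq hw0 hba (by rw [real_inner_comm]; exact hw), Submodule.mem_span_singleton] at hmem
  obtain ⟨t, ht⟩ := hmem
  have hreq : r = a + t • (b - a) := by rw [ht]; abel
  have hrs : r ∈ s := by
    rw [hreq]; exact face_lineMap_mem hs ha hb (hreq ▸ hrK)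
  have hpf : p ∈ s := (hs.2.2 p hp q hq r hrs ⟨1 - τ, τ, by linarith, hτ0, by ring, rfl⟩).1
  obtain ⟨t', ht'⟩ := hline p hpf
  rw [ht', line_inner a t' (b - a) w hw] at hpw
  exact lt_irrefl _ hpw

lemma face_support (hKcv : Convex ℝ K) (hs : IsFace K s)
    (hsd : Module.finrank ℝ (affineSpan ℝ s).direction = 1) (hxs : x ∈ s) :
    ∃ w : Eu 2, w ≠ 0 ∧ w ∈ normalCone K x ∧ (∀ y ∈ s, ⟪y, w⟫ = ⟪x, w⟫) ∧
      (∀ y ∈ K, ⟪y, w⟫ = ⟪x, w⟫ → y ∈ s) := by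
  obtain ⟨a, ha, b, hb, hab⟩ := exists_pair_of_dim_one hsd
  have hba : b - a ≠ 0 := sub_ne_zero.2 (Ne.symm hab)
  have hdir : (affineSpan ℝ s).direction = Submodule.span ℝ {b - a} := by
    rw [direction_affineSpan]
    symm
    apply Submodule.eq_of_le_of_finrank_eq
    · rw [Submodule.span_le, Set.singleton_subset_iff]
      exact vsub_mem_vectorSpan ℝ hb ha
    · rw [finrank_span_singleton hba, ← direction_affineSpan, hsd]
  have hline : ∀ y ∈ s, ∃ t : ℝ, y = a + t • (b - a) := by
    intro y hy
    have hmem : y - a ∈ Submodule.span ℝ {b - a} := by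
      rw [← hdir, direction_affineSpan]
      exact vsub_mem_vectorSpan ℝ hy ha
    rw [Submodule.mem_span_singleton] at hmem
    obtain ⟨t, ht⟩ := hmem
    exact ⟨t, by rw [ht]; abel⟩
  obtain ⟨w₀, hw₀0, hw₀⟩ := exists_orth hba
  have hside : (∀ y ∈ K, ⟪y, w₀⟫ ≤ ⟪a, w₀⟫) ∨ (∀ y ∈ K, ⟪a, w₀⟫ ≤ ⟪y, w₀⟫) := by
    by_contra hcon
    push_neg at hcon
    obtain ⟨⟨p, hp, hpw⟩, ⟨q, hq, hqw⟩⟩ := hcon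
    exact no_cross hKcv hs ha hb hab hw₀0 hw₀ hline hp hq hpw hqw
  have hxa : ∀ w : Eu 2, ⟪b - a, w⟫ = 0 → ⟪x, w⟫ = ⟪a, w⟫ := by
    intro w hw
    obtain ⟨t, ht⟩ := hline x hxs
    rw [ht, line_inner a t (b - a) w hw]
  -- choose w with the correct sign
  have hmain : ∀ w : Eu 2, w ≠ 0 → ⟪b - a, w⟫ = 0 → (∀ y ∈ K, ⟪y, w⟫ ≤ ⟪a, w⟫) →
      w ≠ 0 ∧ w ∈ normalCone K x ∧ (∀ y ∈ s, ⟪y, w⟫ = ⟪x, w⟫) ∧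
      (∀ y ∈ K, ⟪y, w⟫ = ⟪x, w⟫ → y ∈ s) := by
    intro w hw0 hw hub
    have hxw : ⟪x, w⟫ = ⟪a, w⟫ := hxa w hw
    refine ⟨hw0, ?_, ?_, ?_⟩
    · intro y hy
      rw [inner_sub_right, real_inner_comm y w, real_inner_comm x w]
      have := hub y hy
      linarith
    · intro y hy
      obtain ⟨t, ht⟩ := hline y hy
      rw [ht, line_inner a t (b - a) w hw, hxw]
    · intro y hyK hyw
      have hmem : y - a ∈ (Submodule.span ℝ {w})ᗮ := by
        rw [Submodule.mem_orthogonal_singleton_iff_inner_left, inner_sub_left, hyw, hxw, sub_self]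
      rw [orth_eq hw0 hba (by rw [real_inner_comm]; exact hw), Submodule.mem_span_singleton] at hmem
      obtain ⟨t, ht⟩ := hmem
      have hyeq : y = a + t • (b - a) := by rw [ht]; abel
      rw [hyeq]
      exact face_lineMap_mem hs ha hb (hyeq ▸ hyK)
  rcases hside with hside | hside
  · exact ⟨w₀, hmain w₀ hw₀0 hw₀ hside⟩
  · refine ⟨-w₀, hmain (-w₀) (neg_ne_zero.2 hw₀0) (by rw [inner_neg_right, hw₀, neg_zero]) ?_⟩
    intro y hy
    rw [inner_neg_right, inner_neg_right]
    have := hside y hy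
    linarith

end Core

section More
variable {K s : Set (Eu 2)} {x u w a b v y y₀ : Eu 2}

lemma degenerate_exposed (hx : x ∈ extremePoints ℝ K)
    (hy₀K : y₀ ∈ K) (hy₀x : y₀ ≠ x)
    (hlineK : ∀ y ∈ K, ∃ t : ℝ, y = x + t • (y₀ - x)) :
    IsExposedFace K {x} := by
  have hxK : x ∈ K := hx.1
  set d : Eu 2 := y₀ - x with hddef
  have hd0 : d ≠ 0 := sub_ne_zero.2 hy₀x
  have htpos : ∀ y ∈ K, ∀ t : ℝ, y = x + t • d → 0 ≤ t := by
    intro y hy t hyt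
    by_contra hneg
    push_neg at hneg
    have h1t : (0:ℝ) < 1 - t := by linarith
    have hseg : x ∈ openSegment ℝ y y₀ := by
      have key : ∀ α β : ℝ, α + β = 1 → α * t + β * 1 = 0 →
          α • (x + t • d) + β • (x + (1:ℝ) • d) = x := by
        intro α β h1 h2
        have : α • (x + t • d) + β • (x + (1:ℝ) • d) = (α + β) • x + (α * t + β * 1) • d := by
          module
        rw [this, h1, h2]
        module
      refine ⟨1 / (1 - t), (-t) / (1 - t), one_div_pos.2 h1t,
        div_pos (by linarith) h1t, by field_simp; ring, ?_⟩
      have hy₀eq : y₀ = x + (1:ℝ) • d := by rw [hddef]; module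
      rw [hyt, hy₀eq]
      exact key _ _ (by field_simp; ring) (by field_simp; ring)
    have := hx.2 hy₀K hy (by rw [openSegment_symm]; exact hseg)
    exact hy₀x this
  have hun : (x - y₀) ∈ normalCone K x := by
    intro y hy
    obtain ⟨t, ht⟩ := hlineK y hy
    have ht0 := htpos y hy t ht
    rw [ht, add_sub_cancel_left, real_inner_smul_right]
    have hneg : ⟪x - y₀, d⟫ = -(‖d‖^2) := by
      rw [hddef, show x - y₀ = -(y₀ - x) from by abel, inner_neg_left,
        real_inner_self_eq_norm_sq]
    rw [hneg]
    have : (0:ℝ) ≤ ‖d‖^2 := sq_nonneg _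
    nlinarith
  have hsupp := supp_eq_of_normal hxK hun
  refine Or.inr (Or.inr ⟨x - y₀, sub_ne_zero.2 (Ne.symm hy₀x), ?_⟩)
  ext y
  simp only [Set.mem_singleton_iff, Set.mem_setOf_eq]
  constructor
  · rintro rfl; exact ⟨hxK, hsupp.symm⟩
  · rintro ⟨hyK, hyeq⟩
    obtain ⟨t, ht⟩ := hlineK y hyK
    rw [hsupp] at hyeq
    have : ⟪y, x - y₀⟫ - ⟪x, x - y₀⟫ = 0 := by linarith
    rw [ht, inner_add_left, real_inner_smul_left] at this
    have hneg : ⟪d, x - y₀⟫ = -(‖d‖^2) := by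
      rw [hddef, real_inner_comm, show x - y₀ = -(y₀ - x) from by abel, inner_neg_left,
        real_inner_self_eq_norm_sq]
    rw [hneg] at this
    have hd2 : (0:ℝ) < ‖d‖^2 := pow_pos (norm_pos_iff.2 hd0) 2
    have ht0 : t = 0 := by
      have := this
      nlinarith
    rw [ht, ht0]
    simp

lemma extreme_not_interior (hx : x ∈ extremePoints ℝ K) : x ∉ interior K := by
  intro hint
  obtain ⟨ε, hε, hball⟩ := Metric.isOpen_iff.1 isOpen_interior x hint
  set e : Eu 2 := EuclideanSpace.single 0 (1:ℝ) with hedef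
  have he1 : ‖e‖ = 1 := by rw [hedef, EuclideanSpace.norm_single]; norm_num
  have he0 : e ≠ 0 := by intro h; rw [h, norm_zero] at he1; norm_num at he1
  set δ : ℝ := ε / 2 with hδdef
  have hδ0 : 0 < δ := by rw [hδdef]; linarith
  have hmem : ∀ c : ℝ, |c| = δ → x + c • e ∈ K := by
    intro c hc
    apply interior_subset
    apply hball
    rw [Metric.mem_ball, dist_eq_norm, add_sub_cancel_left, norm_smul, he1, mul_one,
      Real.norm_eq_abs, hc]
    rw [hδdef]; linarith
  have h1 : x + δ • e ∈ K := hmem δ (abs_of_pos hδ0)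
  have h2 : x + (-δ) • e ∈ K := hmem (-δ) (by rw [abs_neg, abs_of_pos hδ0])
  have hseg : x ∈ openSegment ℝ (x + δ • e) (x + (-δ) • e) := by
    refine ⟨2⁻¹, 2⁻¹, by norm_num, by norm_num, by norm_num, ?_⟩
    module
  have heq := hx.2 h1 h2 hseg
  have h0 : δ • e = 0 := by rwa [add_eq_left] at heq
  rcases smul_eq_zero.1 h0 with h | h
  · exact absurd h (ne_of_gt hδ0)
  · exact he0 h

lemma exists_normal (hKcv : Convex ℝ K) (hint : (interior K).Nonempty)
    (hx : x ∈ extremePoints ℝ K) : ∃ u : Eu 2, u ≠ 0 ∧ u ∈ normalCone K x := by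
  obtain ⟨f, hf⟩ := geometric_hahn_banach_open_point hKcv.interior isOpen_interior
    (extreme_not_interior hx)
  obtain ⟨b₀, hb₀⟩ := hint
  set u : Eu 2 := (InnerProductSpace.toDual ℝ (Eu 2)).symm f with hudef
  have hu : ∀ z : Eu 2, ⟪u, z⟫ = f z := fun z => InnerProductSpace.toDual_symm_apply
  have hfb : f b₀ < f x := hf b₀ hb₀
  have hfK : ∀ y ∈ K, f y ≤ f x := by
    intro y hy
    by_contra hgt
    push_neg at hgt
    have hd : 0 < f y - f b₀ := by linarith
    set t : ℝ := (f y - f x) / (2 * (f y - f b₀)) with htdef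
    have ht0 : 0 < t := div_pos (by linarith) (by linarith)
    have ht1 : t < 1 := by
      rw [htdef, div_lt_one (by linarith)]
      linarith
    have hz : (1 - t) • y + t • b₀ ∈ interior K :=
      hKcv.combo_closure_interior_mem_interior (subset_closure hy) hb₀ (by linarith) ht0
        (by ring)
    have hlt := hf _ hz
    rw [map_add, map_smul, map_smul, smul_eq_mul, smul_eq_mul] at hlt
    have htmul : t * (f y - f b₀) = (f y - f x) / 2 := by
      rw [htdef]
      field_simp
    nlinarith
  refine ⟨u, ?_, ?_⟩
  · intro h0
    have h1 : ⟪u, b₀⟫ < ⟪u, x⟫ := by rw [hu, hu]; exact hfb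
    rw [h0] at h1
    simp at h1
  · intro y hy
    rw [hu, map_sub]
    have := hfK y hy
    linarith

lemma span_collinear (hu : u ≠ 0)
    (h : Submodule.span ℝ ({u, w} : Set (Eu 2)) ≠ ⊤) : ∃ c : ℝ, w = c • u := by
  have hle : Submodule.span ℝ ({u} : Set (Eu 2)) ≤ Submodule.span ℝ ({u, w} : Set (Eu 2)) :=
    Submodule.span_mono (by simp)
  have hfr2 : Module.finrank ℝ (Submodule.span ℝ ({u, w} : Set (Eu 2))) ≤ 2 := by
    have := Submodule.finrank_le (Submodule.span ℝ ({u, w} : Set (Eu 2)))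
    rwa [finrank_euclideanSpace_fin] at this
  have hne2 : Module.finrank ℝ (Submodule.span ℝ ({u, w} : Set (Eu 2))) ≠ 2 := by
    intro h2
    exact h (Submodule.eq_top_of_finrank_eq (by rw [h2, finrank_euclideanSpace_fin]))
  have hge1 : 1 ≤ Module.finrank ℝ (Submodule.span ℝ ({u, w} : Set (Eu 2))) := by
    have := Submodule.finrank_mono hle
    rwa [finrank_span_singleton hu] at this
  have heq : Submodule.span ℝ ({u} : Set (Eu 2)) = Submodule.span ℝ ({u, w} : Set (Eu 2)) :=
    Submodule.eq_of_le_of_finrank_eq hle (by rw [finrank_span_singleton hu]; omega)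
  have hw : w ∈ Submodule.span ℝ ({u} : Set (Eu 2)) := by
    rw [heq]
    exact Submodule.subset_span (by simp)
  rw [Submodule.mem_span_singleton] at hw
  obtain ⟨c, hc⟩ := hw
  exact ⟨c, hc.symm⟩

lemma span_pair_exposed (hxK : x ∈ K) (hu : u ∈ normalCone K x)
    (hw : w ∈ normalCone K x)
    (hspan : Submodule.span ℝ ({u, w} : Set (Eu 2)) = ⊤) :
    IsExposedFace K {x} := by
  have hv : u + w ∈ normalCone K x := by
    intro z hz
    have h1 := hu z hz
    have h2 := hw z hz
    rw [inner_add_left]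
    linarith
  have hv0 : u + w ≠ 0 := by
    intro h0
    have hwu : w = -u := eq_neg_of_add_eq_zero_right h0
    have hle : Submodule.span ℝ ({u, w} : Set (Eu 2)) ≤ Submodule.span ℝ ({u} : Set (Eu 2)) := by
      rw [Submodule.span_le]
      rintro z hz
      rcases hz with rfl | rfl
      · exact Submodule.subset_span rfl
      · rw [hwu]
        exact Submodule.neg_mem _ (Submodule.subset_span rfl)
    rw [hspan] at hle
    have htop : Submodule.span ℝ ({u} : Set (Eu 2)) = ⊤ := top_unique hle
    by_cases hu0 : u = 0
    · rw [hu0, (Submodule.span_singleton_eq_bot (R := ℝ) (x := (0 : Eu 2))).2 rfl] at htop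
      exact absurd htop bot_ne_top
    · have h1 := finrank_span_singleton (K := ℝ) hu0
      rw [htop, finrank_top, finrank_euclideanSpace_fin] at h1
      omega
  refine Or.inr (Or.inr ⟨u + w, hv0, ?_⟩)
  have hsupp := supp_eq_of_normal hxK hv
  ext z
  simp only [Set.mem_singleton_iff, Set.mem_setOf_eq]
  constructor
  · rintro rfl; exact ⟨hxK, hsupp.symm⟩
  · rintro ⟨hzK, hzeq⟩
    have h1 := hu z hzK
    have h2 := hw z hzK
    have hsum : ⟪u, z - x⟫ + ⟪w, z - x⟫ = 0 := by
      rw [hsupp] at hzeq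
      have e1 : ⟪u, z - x⟫ + ⟪w, z - x⟫ = ⟪u + w, z - x⟫ := (inner_add_left _ _ _).symm
      rw [e1, inner_sub_right, real_inner_comm z (u + w), real_inner_comm x (u + w)]
      linarith
    have hA : ⟪u, z - x⟫ = 0 := by linarith
    have hB : ⟪w, z - x⟫ = 0 := by linarith
    have horth : ∀ v₀ ∈ Submodule.span ℝ ({u, w} : Set (Eu 2)), ⟪v₀, z - x⟫ = 0 := by
      intro v₀ hv₀
      refine Submodule.span_induction (fun v hv => ?_) (by simp) (fun v₁ v₂ _ _ g1 g2 => ?_)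
        (fun c v _ g => ?_) hv₀
      · rcases hv with rfl | rfl
        · exact hA
        · exact hB
      · rw [inner_add_left, g1, g2, add_zero]
      · rw [real_inner_smul_left, g, mul_zero]
    have hzx : z - x ∈ (⊤ : Submodule ℝ (Eu 2))ᗮ := by
      rw [Submodule.mem_orthogonal]
      intro v₀ hv₀
      exact horth v₀ (by rw [hspan]; exact hv₀)
    rw [Submodule.top_orthogonal_eq_bot, Submodule.mem_bot, sub_eq_zero] at hzx
    exact hzx

end More

/-- an extreme point of a planar convex body is non-exposed if and only
if it is smooth (its normal cone is one-dimensional) and incident with exactly one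
segment (one-dimensional face) of `K`. -/
theorem stmt17 (K : Set (Eu 2)) (hK : IsCompact K) (hconv : Convex ℝ K)
    (x : Eu 2) (hx : x ∈ Set.extremePoints ℝ K) :
    ¬ IsExposedFace K {x} ↔
      (Module.finrank ℝ (Submodule.span ℝ (normalCone K x)) = 1 ∧
       ∃! s : Set (Eu 2), IsFace K s ∧
         Module.finrank ℝ (affineSpan ℝ s).direction = 1 ∧ x ∈ s) := by
  have hxK : x ∈ K := hx.1
  constructor
  · intro hne
    have hKne : K ≠ {x} := fun h => hne (Or.inr (Or.inl h.symm))
    obtain ⟨y₁, hy₁K, hy₁x⟩ : ∃ y₁ ∈ K, y₁ ≠ x := by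
      by_contra hcon
      push_neg at hcon
      exact hKne (Subset.antisymm (fun y hy => hcon y hy) (by simp [hxK]))
    have hy₁0 : y₁ - x ≠ 0 := sub_ne_zero.2 hy₁x
    have hint : (interior K).Nonempty := by
      by_contra hemp
      rw [Set.not_nonempty_iff_eq_empty] at hemp
      apply hne
      have hsp : affineSpan ℝ K ≠ ⊤ := by
        intro h
        rw [← hconv.interior_nonempty_iff_affineSpan_eq_top, hemp] at h
        exact Set.not_nonempty_empty h
      have hfr : Module.finrank ℝ (affineSpan ℝ K).direction ≤ 1 := by
        by_contra hgt
        push_neg at hgt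
        have hle2 : Module.finrank ℝ (affineSpan ℝ K).direction ≤ 2 := by
          have := Submodule.finrank_le (affineSpan ℝ K).direction
          rwa [finrank_euclideanSpace_fin] at this
        have hdirtop : (affineSpan ℝ K).direction = ⊤ :=
          Submodule.eq_top_of_finrank_eq (by rw [finrank_euclideanSpace_fin]; omega)
        exact hsp ((AffineSubspace.direction_eq_top_iff_of_nonempty
          ((affineSpan_nonempty ℝ).2 ⟨x, hxK⟩)).1 hdirtop)
      have hlespan : Submodule.span ℝ ({y₁ - x} : Set (Eu 2)) ≤ (affineSpan ℝ K).direction := by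
        rw [Submodule.span_le, Set.singleton_subset_iff, SetLike.mem_coe, direction_affineSpan]
        exact vsub_mem_vectorSpan ℝ hy₁K hxK
      have hdir : (affineSpan ℝ K).direction = Submodule.span ℝ ({y₁ - x} : Set (Eu 2)) := by
        symm
        apply Submodule.eq_of_le_of_finrank_eq hlespan
        have := Submodule.finrank_mono hlespan
        rw [finrank_span_singleton hy₁0] at this ⊢
        omega
      have hlineK : ∀ y ∈ K, ∃ t : ℝ, y = x + t • (y₁ - x) := by
        intro y hy
        have hmem : y - x ∈ (affineSpan ℝ K).direction := by
          rw [direction_affineSpan]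
          exact vsub_mem_vectorSpan ℝ hy hxK
        rw [hdir, Submodule.mem_span_singleton] at hmem
        obtain ⟨t, ht⟩ := hmem
        exact ⟨t, by rw [ht]; abel⟩
      exact degenerate_exposed hx hy₁K hy₁x hlineK
    obtain ⟨u, hu0, hu⟩ := exists_normal hconv hint hx
    have hcoll : ∀ w ∈ normalCone K x, ∃ c : ℝ, w = c • u := by
      intro w hw
      apply span_collinear hu0
      intro htop
      exact hne (span_pair_exposed hxK hu hw htop)
    have hspanN : Submodule.span ℝ (normalCone K x) = Submodule.span ℝ ({u} : Set (Eu 2)) := by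
      apply le_antisymm
      · rw [Submodule.span_le]
        intro w hw
        obtain ⟨c, hc⟩ := hcoll w hw
        rw [SetLike.mem_coe, Submodule.mem_span_singleton]
        exact ⟨c, hc.symm⟩
      · rw [Submodule.span_le, Set.singleton_subset_iff]
        exact Submodule.subset_span hu
    refine ⟨by rw [hspanN, finrank_span_singleton hu0], ?_⟩
    have hsupp := supp_eq_of_normal hxK hu
    have hxF : x ∈ {y ∈ K | ⟪y, u⟫ = supp K u} := ⟨hxK, hsupp.symm⟩
    have hFface : IsFace K {y ∈ K | ⟪y, u⟫ = supp K u} := isFace_exposed hK hconv u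
    have hFne : {y ∈ K | ⟪y, u⟫ = supp K u} ≠ {x} := fun h =>
      hne (Or.inr (Or.inr ⟨u, hu0, h.symm⟩))
    obtain ⟨b, hbF, hbx⟩ : ∃ b ∈ {y ∈ K | ⟪y, u⟫ = supp K u}, b ≠ x := by
      by_contra hcon
      push_neg at hcon
      exact hFne (Subset.antisymm (fun y hy => hcon y hy) (by simp only [Set.singleton_subset_iff]; exact hxF))
    have hbx0 : b - x ≠ 0 := sub_ne_zero.2 hbx
    have hFsub : ∀ y ∈ {y ∈ K | ⟪y, u⟫ = supp K u}, ⟪y - x, u⟫ = 0 := by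
      intro y hy
      rw [inner_sub_left, hy.2, hsupp, sub_self]
    have hFdim : Module.finrank ℝ (affineSpan ℝ {y ∈ K | ⟪y, u⟫ = supp K u}).direction = 1 := by
      have hle : (affineSpan ℝ {y ∈ K | ⟪y, u⟫ = supp K u}).direction ≤
          (Submodule.span ℝ ({u} : Set (Eu 2)))ᗮ := by
        rw [direction_affineSpan, vectorSpan_def, Submodule.span_le]
        intro v hv
        rw [Set.mem_vsub] at hv
        obtain ⟨p, hp, q, hq, rfl⟩ := hv
        rw [SetLike.mem_coe, Submodule.mem_orthogonal_singleton_iff_inner_left]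
        have h1 := hFsub p hp
        have h2 := hFsub q hq
        rw [inner_sub_left] at h1 h2
        show ⟪p - q, u⟫ = 0
        rw [inner_sub_left]
        linarith
      have hge : Submodule.span ℝ ({b - x} : Set (Eu 2)) ≤
          (affineSpan ℝ {y ∈ K | ⟪y, u⟫ = supp K u}).direction := by
        rw [Submodule.span_le, Set.singleton_subset_iff, SetLike.mem_coe, direction_affineSpan]
        exact vsub_mem_vectorSpan ℝ hbF hxF
      have h1 := Submodule.finrank_mono hle
      have h2 := Submodule.finrank_mono hge
      rw [finrank_orth hu0] at h1
      rw [finrank_span_singleton hbx0] at h2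
      omega
    refine ⟨{y ∈ K | ⟪y, u⟫ = supp K u}, ⟨hFface, hFdim, hxF⟩, ?_⟩
    rintro s ⟨hsface, hsdim, hxs⟩
    obtain ⟨w, hw0, hwN, hws, hwK⟩ := face_support hconv hsface hsdim hxs
    obtain ⟨c, hc⟩ := hcoll w hwN
    have hc0 : c ≠ 0 := by
      rintro rfl
      rw [zero_smul] at hc
      exact hw0 hc
    rcases lt_or_gt_of_ne hc0 with hcneg | hcpos
    · exfalso
      have hnu : -u ∈ normalCone K x := by
        intro y hy
        have hcw := hwN y hy
        rw [hc, real_inner_smul_left] at hcw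
        rw [inner_neg_left]
        nlinarith
      have hplane : ∀ y ∈ K, ⟪u, y - x⟫ = 0 := by
        intro y hy
        have h1 := hu y hy
        have h2 := hnu y hy
        rw [inner_neg_left] at h2
        linarith
      have hlineK : ∀ y ∈ K, ∃ t : ℝ, y = x + t • (y₁ - x) := by
        intro y hy
        have hy1 : y - x ∈ (Submodule.span ℝ ({u} : Set (Eu 2)))ᗮ := by
          rw [Submodule.mem_orthogonal_singleton_iff_inner_left, real_inner_comm u (y - x)]
          exact hplane y hy
        rw [orth_eq hu0 hy₁0 (hplane y₁ hy₁K), Submodule.mem_span_singleton] at hy1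
        obtain ⟨t, ht⟩ := hy1
        exact ⟨t, by rw [ht]; abel⟩
      exact hne (degenerate_exposed hx hy₁K hy₁x hlineK)
    · ext y
      simp only [Set.mem_setOf_eq]
      constructor
      · intro hys
        have h1 : ⟪y, w⟫ = ⟪x, w⟫ := hws y hys
        rw [hc, real_inner_smul_right, real_inner_smul_right] at h1
        have h2 : ⟪y, u⟫ = ⟪x, u⟫ := mul_left_cancel₀ hc0 h1
        exact ⟨hsface.1 hys, by rw [h2, hsupp]⟩
      · rintro ⟨hyK, hyu⟩
        apply hwK y hyK
        rw [hc, real_inner_smul_right, real_inner_smul_right]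
        rw [hyu, hsupp]
  · rintro ⟨hdim, s, ⟨hsface, hsdim, hxs⟩, _⟩ hexp
    rcases hexp with h | h | ⟨v, hv0, hvF⟩
    · exact (Set.singleton_ne_empty x) h
    · have hNuniv : normalCone K x = Set.univ := by
        ext w
        simp only [Set.mem_univ, iff_true]
        intro y hy
        rw [← h, Set.mem_singleton_iff] at hy
        rw [hy, sub_self, inner_zero_right]
      rw [hNuniv, Submodule.span_univ, finrank_top, finrank_euclideanSpace_fin] at hdim
      omega
    · have hxmem : x ∈ {y ∈ K | ⟪y, v⟫ = supp K v} := by rw [← hvF]; rfl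
      have hvsupp : supp K v = ⟪x, v⟫ := hxmem.2.symm
      have hvN : v ∈ normalCone K x := by
        intro y hy
        have hle : ⟪y, v⟫ ≤ supp K v := le_csSup (bddAbove_inner hK v) ⟨y, hy, rfl⟩
        rw [hvsupp] at hle
        rw [inner_sub_right, real_inner_comm y v, real_inner_comm x v]
        linarith
      obtain ⟨a, ha, b, hb, hab⟩ := exists_pair_of_dim_one hsdim
      obtain ⟨w, hw0, hwN, hws, hwK⟩ := face_support hconv hsface hsdim hxs
      have hcoll : ∃ c : ℝ, w = c • v := by
        have hvle : Submodule.span ℝ ({v} : Set (Eu 2)) ≤ Submodule.span ℝ (normalCone K x) := by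
          rw [Submodule.span_le, Set.singleton_subset_iff]
          exact Submodule.subset_span hvN
        have heq : Submodule.span ℝ ({v} : Set (Eu 2)) = Submodule.span ℝ (normalCone K x) :=
          Submodule.eq_of_le_of_finrank_eq hvle (by rw [finrank_span_singleton hv0, hdim])
        have hwmem : w ∈ Submodule.span ℝ ({v} : Set (Eu 2)) := by
          rw [heq]
          exact Submodule.subset_span hwN
        rw [Submodule.mem_span_singleton] at hwmem
        obtain ⟨c, hc⟩ := hwmem
        exact ⟨c, hc.symm⟩
      obtain ⟨c, hc⟩ := hcoll
      have hc0 : c ≠ 0 := by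
        rintro rfl
        rw [zero_smul] at hc
        exact hw0 hc
      have hsx : s ⊆ {x} := by
        rcases lt_or_gt_of_ne hc0 with hcneg | hcpos
        · have hplane : ∀ y ∈ K, ⟪y, v⟫ = ⟪x, v⟫ := by
            intro y hy
            have h1 := inner_le_of_normal hvN hy
            have h2 := hwN y hy
            rw [hc, real_inner_smul_left] at h2
            have h3 : 0 ≤ ⟪v, y - x⟫ := by nlinarith
            rw [inner_sub_right, real_inner_comm y v, real_inner_comm x v] at h3
            linarith
          intro y hys
          have hyK := hsface.1 hys
          have hmem : y ∈ {z ∈ K | ⟪z, v⟫ = supp K v} :=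
            ⟨hyK, by rw [hplane y hyK, hvsupp]⟩
          rw [← hvF] at hmem
          exact hmem
        · intro y hys
          have h1 : ⟪y, w⟫ = ⟪x, w⟫ := hws y hys
          rw [hc, real_inner_smul_right, real_inner_smul_right] at h1
          have h2 : ⟪y, v⟫ = ⟪x, v⟫ := mul_left_cancel₀ hc0 h1
          have hmem : y ∈ {z ∈ K | ⟪z, v⟫ = supp K v} :=
            ⟨hsface.1 hys, by rw [h2, hvsupp]⟩
          rw [← hvF] at hmem
          exact hmem
      have ha' := hsx ha
      have hb' := hsx hb
      rw [Set.mem_singleton_iff] at ha' hb'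
      exact hab (ha'.trans hb'.symm)
end
end

section
/- Let K ⊆ ℝ² be a convex body with 0 ∈ int(K). An exposed point x of K is a polyhedral corner (both one-dimensional faces of the normal cone N(x) are normal cones of K) if and only if x is the intersection of two distinct segments (one-dimensional faces) of K. -/
open RealInnerProductSpace Set
open scoped ENNReal

noncomputable section

section Helpers

variable {n : ℕ} {K : Set (Eu n)} {x y u v : Eu n}

lemma nc_zero : (0 : Eu n) ∈ normalCone K x := fun y _ => by simp

lemma nc_add (hu : u ∈ normalCone K x) (hv : v ∈ normalCone K x) :
    u + v ∈ normalCone K x := fun y hy => by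
  have := hu y hy; have := hv y hy
  rw [inner_add_left]; linarith

lemma nc_smul {t : ℝ} (ht : 0 ≤ t) (hu : u ∈ normalCone K x) :
    t • u ∈ normalCone K x := fun y hy => by
  have := hu y hy
  rw [real_inner_smul_left]; exact mul_nonpos_of_nonneg_of_nonpos ht this

lemma nc_closed : IsClosed (normalCone K x) := by
  have : normalCone K x = ⋂ y ∈ K, {u : Eu n | ⟪u, y - x⟫ ≤ 0} := by
    ext u; simp [normalCone]
  rw [this]
  exact isClosed_biInter fun y _ => isClosed_le (Continuous.inner continuous_id continuous_const) continuous_const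

lemma nc_convex : Convex ℝ (normalCone K x) := fun p hp q hq a b ha hb _ =>
  nc_add (nc_smul ha hp) (nc_smul hb hq)

lemma nc_inner_eq (hx : x ∈ K) (hy : y ∈ K) (hu : u ∈ normalCone K x)
    (hu' : u ∈ normalCone K y) : ⟪u, y - x⟫ = 0 := by
  have h1 := hu y hy
  have h2 := hu' x hx
  rw [show x - y = -(y-x) by abel, inner_neg_right] at h2
  linarith

lemma perp_two {v a b : Eu 2} (hind : LinearIndependent ℝ ![a, b])
    (h1 : ⟪a, v⟫ = 0) (h2 : ⟪b, v⟫ = 0) : v = 0 := by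
  have hsp : Submodule.span ℝ {a, b} = ⊤ := by
    have hcard : Module.finrank ℝ (Eu 2) = 2 := finrank_euclideanSpace_fin
    have := hind.span_eq_top_of_card_eq_finrank (by simp [hcard])
    rwa [show Set.range ![a, b] = {a, b} by simp [Matrix.range_cons]; exact Set.pair_comm b a] at this
  have hv : v ∈ Submodule.span ℝ {a, b} := by rw [hsp]; trivial
  obtain ⟨c, d, hcd⟩ := Submodule.mem_span_pair.1 hv
  have : ⟪v, v⟫ = 0 := by
    have : ⟪v, v⟫ = ⟪c • a + d • b, v⟫ := by rw [hcd]
    rw [this, inner_add_left, real_inner_smul_left, real_inner_smul_left, h1, h2]; ring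
  exact inner_self_eq_zero.1 this

/-- The exposed set `{z ∈ K | ⟪u, z - x⟫ = 0}` is a face when `u ∈ N(x)`. -/
lemma face_exposed (hconv : Convex ℝ K) (hu : u ∈ normalCone K x) :
    IsFace K {z ∈ K | ⟪u, z - x⟫ = 0} := by
  refine ⟨fun z hz => hz.1, ?_, ?_⟩
  · rintro p ⟨hp, hp0⟩ q ⟨hq, hq0⟩ a b ha hb hab
    refine ⟨hconv hp hq ha hb hab, ?_⟩
    have : a • p + b • q - x = a • (p - x) + b • (q - x) := by
      have h' : a • (p - x) + b • (q - x) = a • p + b • q - (a + b) • x := by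
        rw [add_smul, smul_sub, smul_sub]; abel
      rw [h', hab, one_smul]
    rw [this, inner_add_right, real_inner_smul_right, real_inner_smul_right, hp0, hq0]
    ring
  · rintro p hp q hq z ⟨hz, hz0⟩ hseg
    obtain ⟨a, b, ha, hb, hab, rfl⟩ := hseg
    have h1 : ⟪u, p - x⟫ ≤ 0 := hu p hp
    have h2 : ⟪u, q - x⟫ ≤ 0 := hu q hq
    have key : a * ⟪u, p - x⟫ + b * ⟪u, q - x⟫ = 0 := by
      have : a • p + b • q - x = a • (p - x) + b • (q - x) := by
        have h' : a • (p - x) + b • (q - x) = a • p + b • q - (a + b) • x := by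
          rw [add_smul, smul_sub, smul_sub]; abel
        rw [h', hab, one_smul]
      rw [this, inner_add_right, real_inner_smul_right, real_inner_smul_right] at hz0
      linarith
    have hp0 : ⟪u, p - x⟫ = 0 := by nlinarith
    have hq0 : ⟪u, q - x⟫ = 0 := by nlinarith
    exact ⟨⟨hp, hp0⟩, ⟨hq, hq0⟩⟩

lemma nc_salient (h0 : (0 : Eu n) ∈ interior K) (hu : u ∈ normalCone K x)
    (hv : -u ∈ normalCone K x) : u = 0 := by
  by_contra hne
  obtain ⟨ε, hε, hball⟩ := Metric.mem_nhds_iff.1 (mem_interior_iff_mem_nhds.1 h0)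
  have hun : (0:ℝ) < ‖u‖ := norm_pos_iff.2 hne
  set c : ℝ := ε / (2 * ‖u‖) with hc
  have hcpos : 0 < c := by positivity
  have hmem : ∀ s : ℝ, |s| = c → s • u ∈ K := by
    intro s hs
    apply hball
    simp only [Metric.mem_ball, dist_zero_right, norm_smul, Real.norm_eq_abs, hs]
    rw [hc]; rw [div_mul_eq_mul_div, mul_comm]
    calc ‖u‖ * ε / (2 * ‖u‖) = ε / 2 := by field_simp
    _ < ε := by linarith
  have key : ∀ y ∈ K, ⟪u, y - x⟫ = 0 := by
    intro y hy
    have h1 := hu y hy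
    have h2 := hv y hy
    rw [inner_neg_left] at h2
    linarith
  have e1 := key (c • u) (hmem c (abs_of_pos hcpos))
  have e2 := key ((-c) • u) (hmem (-c) (by rw [abs_neg, abs_of_pos hcpos]))
  rw [inner_sub_right, real_inner_smul_right, real_inner_self_eq_norm_sq] at e1 e2
  nlinarith [mul_pos hcpos (pow_pos hun 2)]

lemma support_exists (hconv : Convex ℝ K) (h0 : (0 : Eu n) ∈ interior K) {m : Eu n}
    (hm : m ∈ K) (hmi : m ∉ interior K) : ∃ u : Eu n, u ≠ 0 ∧ u ∈ normalCone K m := by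
  obtain ⟨f, hf⟩ := geometric_hahn_banach_open_point hconv.interior isOpen_interior hmi
  have hle : ∀ y ∈ K, f y ≤ f m := by
    intro y hy
    have hseq : ∀ b : ℝ, 0 ≤ b → b < 1 → b * f y < f m := by
      intro b hb hb1
      have hmem : (1 - b) • (0 : Eu n) + b • y ∈ interior K :=
        hconv.combo_interior_closure_mem_interior h0 (subset_closure hy)
          (by linarith) hb (by ring)
      have := hf _ hmem
      rwa [map_add, map_smul, map_smul, map_zero, smul_zero, zero_add, smul_eq_mul] at this
    have htend : Filter.Tendsto (fun n : ℕ => (1 - 1/(n+1)) * f y) Filter.atTop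
        (nhds (f y)) := by
      have h1 : Filter.Tendsto (fun n : ℕ => 1 - 1/((n:ℝ)+1)) Filter.atTop (nhds 1) := by
        have : Filter.Tendsto (fun n : ℕ => 1 / ((n:ℝ) + 1)) Filter.atTop (nhds 0) :=
          tendsto_one_div_add_atTop_nhds_zero_nat
        have := Filter.Tendsto.const_sub (1:ℝ) this
        simpa using this
      have := h1.mul_const (f y)
      simpa using this
    refine le_of_tendsto htend (Filter.Eventually.of_forall fun k => ?_)
    have hk : (0:ℝ) ≤ k := Nat.cast_nonneg k
    have hlt : 1/((k:ℝ)+1) ≤ 1 := by rw [div_le_one (by linarith)]; linarith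
    have hgt : (0:ℝ) < 1/((k:ℝ)+1) := by positivity
    exact (hseq _ (by linarith) (by linarith)).le
  refine ⟨(InnerProductSpace.toDual ℝ (Eu n)).symm f, ?_, ?_⟩
  · intro h
    have h2 : f 0 < f m := hf 0 h0
    have : ∀ z, f z = 0 := by
      intro z
      have := InnerProductSpace.toDual_symm_apply (𝕜 := ℝ) (E := Eu n) (x := z) (y := f)
      rw [h] at this
      simpa using this.symm
    rw [this 0, this m] at h2; exact lt_irrefl _ h2
  · intro y hy
    have h1 : ⟪(InnerProductSpace.toDual ℝ (Eu n)).symm f, y - m⟫ = f (y - m) :=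
      InnerProductSpace.toDual_symm_apply
    rw [h1, map_sub]
    linarith [hle y hy]

lemma face_of_interior_mem {s : Set (Eu n)} (hf : IsFace K s) {m : Eu n} (hm : m ∈ s)
    (hmi : m ∈ interior K) : K ⊆ s := by
  intro z hz
  rcases eq_or_ne z m with rfl | hne
  · exact hm
  obtain ⟨ε, hε, hball⟩ := Metric.mem_nhds_iff.1 (mem_interior_iff_mem_nhds.1 hmi)
  have hmz : (0:ℝ) < ‖m - z‖ := by
    rw [norm_pos_iff, sub_ne_zero]; exact fun h => hne h.symm
  set δ : ℝ := ε / (2 * ‖m - z‖) with hδ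
  have hδpos : 0 < δ := by positivity
  set z' : Eu n := m + δ • (m - z) with hz'
  have hz'K : z' ∈ K := by
    apply hball
    simp only [Metric.mem_ball, hz', dist_eq_norm, add_sub_cancel_left, norm_smul,
      Real.norm_eq_abs, abs_of_pos hδpos]
    rw [hδ, div_mul_eq_mul_div, mul_comm]
    calc ‖m - z‖ * ε / (2 * ‖m - z‖) = ε / 2 := by field_simp
    _ < ε := by linarith
  have hseg : m ∈ openSegment ℝ z z' := by
    refine ⟨δ/(1+δ), 1/(1+δ), by positivity, by positivity, by field_simp; ring, ?_⟩
    rw [hz']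
    match_scalars <;> field_simp <;> ring
  exact (hf.2.2 z hz z' hz'K m hm hseg).1

/-- A 1-dimensional face of a planar body has a common outer normal at all its points. -/
lemma seg_normal {K s : Set (Eu 2)} (hconv : Convex ℝ K) (h0 : (0 : Eu 2) ∈ interior K)
    (hs : IsFace K s) (hd : Module.finrank ℝ (affineSpan ℝ s).direction = 1)
    {x : Eu 2} (hx : x ∈ s) :
    ∃ (u y₀ : Eu 2), u ≠ 0 ∧ y₀ ∈ s ∧ y₀ ≠ x ∧ ∀ z ∈ s, u ∈ normalCone K z := by
  -- find a second point
  have h2pts : ∃ y₀ ∈ s, y₀ ≠ x := by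
    by_contra h
    push_neg at h
    have hsub : s ⊆ {x} := fun z hz => h z hz
    have : (affineSpan ℝ s).direction = ⊥ := by
      rw [direction_affineSpan]
      exact le_bot_iff.1 ((vectorSpan_mono ℝ hsub).trans_eq (vectorSpan_singleton ℝ x))
    rw [this] at hd
    simp at hd
  obtain ⟨y₀, hy₀s, hy₀x⟩ := h2pts
  have hyx : y₀ - x ≠ 0 := sub_ne_zero.2 hy₀x
  -- the midpoint
  set m : Eu 2 := (1/2 : ℝ) • x + (1/2 : ℝ) • y₀ with hm
  have hms : m ∈ s := hs.2.1 hx hy₀s (by norm_num) (by norm_num) (by norm_num)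
  have hmK : m ∈ K := hs.1 hms
  have hmi : m ∉ interior K := by
    intro hint
    have hKs : K ⊆ s := face_of_interior_mem hs hms hint
    have hsK : s = K := Subset.antisymm hs.1 hKs
    have htop : affineSpan ℝ s = ⊤ := by
      rw [hsK]
      apply affineSpan_eq_top_of_nonempty_interior
      rw [hconv.convexHull_eq]
      exact ⟨0, h0⟩
    rw [htop, AffineSubspace.direction_top] at hd
    rw [finrank_top] at hd
    rw [finrank_euclideanSpace_fin] at hd
    norm_num at hd
  obtain ⟨u, hu0, huN⟩ := support_exists hconv h0 hmK hmi
  -- x and y₀ both attain the max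
  have hxm : ⟪u, x - m⟫ = 0 ∧ ⟪u, y₀ - m⟫ = 0 := by
    have h1 := huN x (hs.1 hx)
    have h2 := huN y₀ (hs.1 hy₀s)
    have hsum : (x - m) + (y₀ - m) = 0 := by
      rw [hm]; match_scalars <;> ring
    have : ⟪u, x - m⟫ + ⟪u, y₀ - m⟫ = 0 := by
      rw [← inner_add_right, hsum, inner_zero_right]
    constructor <;> linarith
  -- the direction is spanned by y₀ - x
  have hdir : (affineSpan ℝ s).direction = Submodule.span ℝ {y₀ - x} := by
    have hle : Submodule.span ℝ {y₀ - x} ≤ (affineSpan ℝ s).direction := by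
      rw [Submodule.span_singleton_le_iff_mem]
      have := AffineSubspace.vsub_mem_direction (subset_affineSpan ℝ s hy₀s)
        (subset_affineSpan ℝ s hx)
      simpa using this
    have hfr : Module.finrank ℝ (Submodule.span ℝ {y₀ - x}) = 1 := finrank_span_singleton hyx
    exact (Submodule.eq_of_le_of_finrank_le hle (by rw [hd, hfr])).symm
  have huyx : ⟪u, y₀ - x⟫ = 0 := by
    have : y₀ - x = (y₀ - m) + (m - x) := by abel
    have hmx : ⟪u, m - x⟫ = 0 := by
      rw [show m - x = -(x - m) by abel, inner_neg_right, hxm.1]; ring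
    rw [this, inner_add_right, hxm.2, hmx]; ring
  refine ⟨u, y₀, hu0, hy₀s, hy₀x, ?_⟩
  intro z hzs
  have hzx : z - x ∈ Submodule.span ℝ {y₀ - x} := by
    rw [← hdir]
    have := AffineSubspace.vsub_mem_direction (subset_affineSpan ℝ s hzs)
      (subset_affineSpan ℝ s hx)
    simpa using this
  obtain ⟨c, hc⟩ := Submodule.mem_span_singleton.1 hzx
  have hzm : ⟪u, z - m⟫ = 0 := by
    have hd1 : z - m = (z - x) + (x - m) := by abel
    rw [hd1, inner_add_right, ← hc, real_inner_smul_right, huyx, hxm.1]; ring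
  intro y hy
  have h1 := huN y hy
  have hd2 : y - z = (y - m) + (m - z) := by abel
  rw [hd2, inner_add_right, show m - z = -(z - m) by abel, inner_neg_right, hzm]
  linarith

lemma span_pair_top {a b : Eu 2} (hind : LinearIndependent ℝ ![a, b]) :
    Submodule.span ℝ {a, b} = ⊤ := by
  have hcard : Module.finrank ℝ (Eu 2) = 2 := finrank_euclideanSpace_fin
  have := hind.span_eq_top_of_card_eq_finrank (by simp [hcard])
  rwa [show Set.range ![a, b] = {a, b} by simp [Matrix.range_cons]; exact Set.pair_comm b a]
    at this

lemma orth_finrank {a : Eu 2} (ha : a ≠ 0) :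
    Module.finrank ℝ ((ℝ ∙ a)ᗮ : Submodule ℝ (Eu 2)) = 1 := by
  have h1 := Submodule.finrank_add_finrank_orthogonal (𝕜 := ℝ) (ℝ ∙ a)
  rw [finrank_span_singleton ha, finrank_euclideanSpace_fin] at h1
  omega

/-- Two distinct segments through `x` have independent normals. -/
lemma normals_indep {K s₁ s₂ : Set (Eu 2)} {x y₁ y₂ u₁ u₂ : Eu 2}
    (hs₁ : IsFace K s₁) (hs₂ : IsFace K s₂) (hcap : {x} = s₁ ∩ s₂)
    (hy₁ : y₁ ∈ s₁) (hy₁x : y₁ ≠ x) (hy₂ : y₂ ∈ s₂) (hy₂x : y₂ ≠ x)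
    (hu₁ : u₁ ≠ 0) (hu₂ : u₂ ≠ 0)
    (hp₁ : ⟪u₁, y₁ - x⟫ = 0) (hp₂ : ⟪u₂, y₂ - x⟫ = 0) :
    LinearIndependent ℝ ![u₁, u₂] := by
  have hx₁ : x ∈ s₁ := by
    have : x ∈ s₁ ∩ s₂ := hcap ▸ rfl
    exact this.1
  have hx₂ : x ∈ s₂ := by
    have : x ∈ s₁ ∩ s₂ := hcap ▸ rfl
    exact this.2
  rw [LinearIndependent.pair_iff' hu₁]
  intro c hc
  have hc0 : c ≠ 0 := by rintro rfl; simp at hc; exact hu₂ hc.symm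
  -- y₂ - x is orthogonal to u₁ too
  have hp₂' : ⟪u₁, y₂ - x⟫ = 0 := by
    have : ⟪c • u₁, y₂ - x⟫ = 0 := by rw [hc]; exact hp₂
    rw [real_inner_smul_left] at this
    exact (mul_eq_zero.1 this).resolve_left hc0
  -- both y₁-x, y₂-x in 1-dim orthogonal complement
  have hmem₁ : y₁ - x ∈ (ℝ ∙ u₁)ᗮ := Submodule.mem_orthogonal_singleton_iff_inner_right.2 hp₁
  have hmem₂ : y₂ - x ∈ (ℝ ∙ u₁)ᗮ := Submodule.mem_orthogonal_singleton_iff_inner_right.2 hp₂'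
  have hyx₁ : y₁ - x ≠ 0 := sub_ne_zero.2 hy₁x
  have hspan : (ℝ ∙ u₁)ᗮ = Submodule.span ℝ {y₁ - x} := by
    refine (Submodule.eq_of_le_of_finrank_le ?_ ?_).symm
    · rw [Submodule.span_singleton_le_iff_mem]; exact hmem₁
    · rw [orth_finrank hu₁, finrank_span_singleton hyx₁]
  obtain ⟨t, ht⟩ := Submodule.mem_span_singleton.1 (hspan ▸ hmem₂)
  have ht0 : t ≠ 0 := by
    rintro rfl
    rw [zero_smul] at ht
    exact hy₂x (by have := ht.symm; rwa [sub_eq_zero] at this)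
  rcases lt_or_gt_of_ne ht0 with htneg | htpos
  · -- t < 0 : x is between y₁ and y₂
    have hseg : x ∈ openSegment ℝ y₁ y₂ := by
      have h1t : (0:ℝ) < 1 - t := by linarith
      refine ⟨-t/(1-t), 1/(1-t), div_pos (by linarith) h1t, div_pos one_pos h1t,
        by field_simp; ring, ?_⟩
      have hy2 : y₂ = x + t • (y₁ - x) := by rw [ht]; abel
      rw [hy2]
      match_scalars <;> (field_simp; try ring)
    have hy₂s₁ : y₂ ∈ s₁ := (hs₁.2.2 y₁ (hs₁.1 hy₁) y₂ (hs₂.1 hy₂) x hx₁ hseg).2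
    have : y₂ ∈ ({x} : Set (Eu 2)) := hcap ▸ ⟨hy₂s₁, hy₂⟩
    exact hy₂x this
  · -- t > 0 : a common nontrivial point
    set a : ℝ := min t 1 with hadef
    have ha0 : 0 < a := lt_min htpos one_pos
    have ha1 : a ≤ 1 := min_le_right _ _
    set p : Eu 2 := x + a • (y₁ - x) with hp
    have hps₁ : p ∈ s₁ := by
      have : p = (1-a) • x + a • y₁ := by rw [hp]; match_scalars <;> ring
      rw [this]
      exact hs₁.2.1 hx₁ hy₁ (by linarith) ha0.le (by ring)
    have hps₂ : p ∈ s₂ := by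
      have hat : a/t ≤ 1 := by
        rw [div_le_one htpos]; exact min_le_left _ _
      have : p = (1-a/t) • x + (a/t) • y₂ := by
        have hy2 : y₂ = x + t • (y₁ - x) := by rw [ht]; abel
        rw [hp, hy2]
        match_scalars <;> (field_simp; try ring)
      rw [this]
      exact hs₂.2.1 hx₂ hy₂ (by linarith) (by positivity) (by ring)
    have : p ∈ ({x} : Set (Eu 2)) := hcap ▸ ⟨hps₁, hps₂⟩
    rw [mem_singleton_iff, hp] at this
    have : a • (y₁ - x) = 0 := by
      have h' := this
      have : x + a • (y₁ - x) - x = 0 := by rw [h']; abel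
      rwa [add_sub_cancel_left] at this
    exact hyx₁ ((smul_eq_zero.1 this).resolve_left (ne_of_gt ha0))

/-- decomposition of the normal cone by two segment normals -/
lemma cone_decomp {K : Set (Eu 2)} {x y₁ y₂ u₁ u₂ : Eu 2}
    (hy₁K : y₁ ∈ K) (hy₂K : y₂ ∈ K) (hy₁x : y₁ ≠ x) (hy₂x : y₂ ≠ x)
    (hu₁N : u₁ ∈ normalCone K x) (hu₂N : u₂ ∈ normalCone K x)
    (hind : LinearIndependent ℝ ![u₁, u₂])
    (hp₁ : ⟪u₁, y₁ - x⟫ = 0) (hp₂ : ⟪u₂, y₂ - x⟫ = 0) :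
    ∀ u ∈ normalCone K x, ∃ a b : ℝ, 0 ≤ a ∧ 0 ≤ b ∧ u = a • u₁ + b • u₂ := by
  have hstrict₁ : ⟪u₂, y₁ - x⟫ < 0 := by
    have hle := hu₂N y₁ hy₁K
    rcases hle.lt_or_eq with h | h
    · exact h
    · exfalso
      exact hy₁x (by have := perp_two hind hp₁ h; rwa [sub_eq_zero] at this)
  have hstrict₂ : ⟪u₁, y₂ - x⟫ < 0 := by
    have hle := hu₁N y₂ hy₂K
    rcases hle.lt_or_eq with h | h
    · exact h
    · exfalso
      exact hy₂x (by have := perp_two hind h hp₂; rwa [sub_eq_zero] at this)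
  intro u huN
  have hu : u ∈ Submodule.span ℝ {u₁, u₂} := by rw [span_pair_top hind]; trivial
  obtain ⟨a, b, hab⟩ := Submodule.mem_span_pair.1 hu
  refine ⟨a, b, ?_, ?_, hab.symm⟩
  · have h1 := huN y₂ hy₂K
    rw [← hab, inner_add_left, real_inner_smul_left, real_inner_smul_left, hp₂] at h1
    nlinarith
  · have h1 := huN y₁ hy₁K
    rw [← hab, inner_add_left, real_inner_smul_left, real_inner_smul_left, hp₁] at h1
    nlinarith

def ray (a : Eu 2) : Set (Eu 2) := {w | ∃ t : ℝ, 0 ≤ t ∧ w = t • a}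

lemma ray_face {K : Set (Eu 2)} {x u₁ u₂ : Eu 2}
    (hu₁N : u₁ ∈ normalCone K x) (hu₂N : u₂ ∈ normalCone K x)
    (hind : LinearIndependent ℝ ![u₁, u₂])
    (hdec : ∀ u ∈ normalCone K x, ∃ a b : ℝ, 0 ≤ a ∧ 0 ≤ b ∧ u = a • u₁ + b • u₂)
    {r : Set (Eu 2)} (hface : IsFace (normalCone K x) r)
    (hr1 : Module.finrank ℝ (Submodule.span ℝ r) = 1) :
    r = ray u₁ ∨ r = ray u₂ := by
  have hspan_top : Submodule.span ℝ {u₁, u₂} = ⊤ := span_pair_top hind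
  -- no element of r has both coordinates positive
  have hnotboth : ∀ v ∈ r, ∀ a b : ℝ, 0 < a → 0 < b → v = a • u₁ + b • u₂ → False := by
    intro v hv a b ha hb hvab
    have h1 : (2*a) • u₁ ∈ normalCone K x := nc_smul (by linarith) hu₁N
    have h2 : (2*b) • u₂ ∈ normalCone K x := nc_smul (by linarith) hu₂N
    have hseg : v ∈ openSegment ℝ ((2*a) • u₁) ((2*b) • u₂) := by
      refine ⟨1/2, 1/2, by norm_num, by norm_num, by norm_num, ?_⟩
      rw [hvab]; match_scalars <;> ring
    obtain ⟨hm₁, hm₂⟩ := hface.2.2 _ h1 _ h2 v hv hseg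
    have hu₁r : u₁ ∈ Submodule.span ℝ r := by
      have : ((2*a)⁻¹ * (2*a)) • u₁ ∈ Submodule.span ℝ r := by
        rw [mul_smul]
        exact Submodule.smul_mem _ _ (Submodule.subset_span hm₁)
      rwa [inv_mul_cancel₀ (by positivity), one_smul] at this
    have hu₂r : u₂ ∈ Submodule.span ℝ r := by
      have : ((2*b)⁻¹ * (2*b)) • u₂ ∈ Submodule.span ℝ r := by
        rw [mul_smul]
        exact Submodule.smul_mem _ _ (Submodule.subset_span hm₂)
      rwa [inv_mul_cancel₀ (by positivity), one_smul] at this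
    have : Submodule.span ℝ r = ⊤ := by
      rw [← top_le_iff, ← hspan_top, Submodule.span_le]
      rintro w (rfl | rfl) <;> assumption
    rw [this, finrank_top, finrank_euclideanSpace_fin] at hr1
    norm_num at hr1
  -- every nonzero element of r is on one of the rays
  have hclass : ∀ v ∈ r, v ≠ 0 → (∃ t : ℝ, 0 < t ∧ v = t • u₁) ∨
      (∃ t : ℝ, 0 < t ∧ v = t • u₂) := by
    intro v hv hv0
    obtain ⟨a, b, ha, hb, hvab⟩ := hdec v (hface.1 hv)
    rcases ha.lt_or_eq with ha' | ha'
    · rcases hb.lt_or_eq with hb' | hb'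
      · exact absurd (hnotboth v hv a b ha' hb' hvab) id
      · exact Or.inl ⟨a, ha', by rw [hvab, ← hb', zero_smul, add_zero]⟩
    · rcases hb.lt_or_eq with hb' | hb'
      · exact Or.inr ⟨b, hb', by rw [hvab, ← ha', zero_smul, zero_add]⟩
      · exfalso; apply hv0; rw [hvab, ← ha', ← hb', zero_smul, zero_smul, add_zero]
  -- r contains a nonzero element
  have hex : ∃ v ∈ r, v ≠ 0 := by
    by_contra h
    push_neg at h
    have : r ⊆ {0} := fun v hv => h v hv
    have : Submodule.span ℝ r ≤ ⊥ := by
      rw [← Submodule.span_singleton_eq_bot.mpr rfl]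
      exact Submodule.span_mono this
    rw [le_bot_iff.1 this] at hr1
    simp at hr1
  obtain ⟨v, hvr, hv0⟩ := hex
  -- generic ray argument
  have main : ∀ w a : Eu 2, a ∈ normalCone K x → (∃ t : ℝ, 0 < t ∧ w = t • a) → w ∈ r →
      ray a ⊆ r := by
    intro w a haN hta hwr
    obtain ⟨t, ht, rfl⟩ := hta
    · -- first get 0 ∈ r and arbitrary c • a ∈ r for c > t
      have hzero : (0 : Eu 2) ∈ r ∧ ∀ c : ℝ, t < c → c • a ∈ r := by
        constructor
        · have hseg : t • a ∈ openSegment ℝ (0 : Eu 2) ((2*t) • a) := by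
            refine ⟨1/2, 1/2, by norm_num, by norm_num, by norm_num, ?_⟩
            rw [smul_zero, zero_add, smul_smul]; congr 1; ring
          exact (hface.2.2 0 nc_zero _ (nc_smul (by linarith) haN) _ hwr hseg).1
        · intro c hc
          have hc0 : (0:ℝ) < c := lt_trans ht hc
          have hseg : t • a ∈ openSegment ℝ (0 : Eu 2) (c • a) := by
            refine ⟨1 - t/c, t/c, ?_, div_pos ht hc0, by ring, ?_⟩
            · have : t/c < 1 := by rw [div_lt_one hc0]; exact hc
              linarith
            · rw [smul_zero, zero_add, smul_smul]
              congr 1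
              exact div_mul_cancel₀ t (ne_of_gt hc0)
          exact (hface.2.2 0 nc_zero _ (nc_smul hc0.le haN) _ hwr hseg).2
      rintro w' ⟨c, hc, rfl⟩
      rcases hc.lt_or_eq with hc' | hc'
      · -- c > 0 : convex combination of 0 and (t+c) • a
        have hmem : (t + c) • a ∈ r := hzero.2 _ (by linarith)
        have h0r : (0 : Eu 2) ∈ r := hzero.1
        have htc : (0:ℝ) < t + c := by linarith
        have hco1 : (0:ℝ) ≤ 1 - c/(t+c) := by
          have : c/(t+c) ≤ 1 := by rw [div_le_one htc]; linarith
          linarith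
        have hco2 : (0:ℝ) ≤ c/(t+c) := le_of_lt (div_pos hc' htc)
        have := hface.2.1 h0r hmem hco1 hco2 (by ring)
        rwa [smul_zero, zero_add, smul_smul, div_mul_cancel₀ c (ne_of_gt htc)] at this
      · rw [← hc', zero_smul]; exact hzero.1
  -- finish by cases on which ray v lies
  rcases hclass v hvr hv0 with ⟨t, ht, rfl⟩ | ⟨t, ht, rfl⟩
  · left
    have hsub := main _ u₁ hu₁N ⟨t, ht, rfl⟩ hvr
    refine Subset.antisymm ?_ hsub
    intro w hw
    rcases eq_or_ne w 0 with rfl | hw0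
    · exact ⟨0, le_refl 0, by rw [zero_smul]⟩
    rcases hclass w hw hw0 with ⟨c, hc, rfl⟩ | ⟨c, hc, rfl⟩
    · exact ⟨c, hc.le, rfl⟩
    · exfalso
      -- midpoint of t•u₁ and c•u₂ has both coords positive
      have hmid : (1/2 : ℝ) • (t • u₁) + (1/2 : ℝ) • (c • u₂) ∈ r :=
        hface.2.1 hvr hw (by norm_num) (by norm_num) (by norm_num)
      refine hnotboth _ hmid (t/2) (c/2) (by positivity) (by positivity) ?_
      rw [smul_smul, smul_smul]; ring_nf
  · right
    have hsub := main _ u₂ hu₂N ⟨t, ht, rfl⟩ hvr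
    refine Subset.antisymm ?_ hsub
    intro w hw
    rcases eq_or_ne w 0 with rfl | hw0
    · exact ⟨0, le_refl 0, by rw [zero_smul]⟩
    rcases hclass w hw hw0 with ⟨c, hc, rfl⟩ | ⟨c, hc, rfl⟩
    · exfalso
      have hmid : (1/2 : ℝ) • (t • u₂) + (1/2 : ℝ) • (c • u₁) ∈ r :=
        hface.2.1 hvr hw (by norm_num) (by norm_num) (by norm_num)
      refine hnotboth _ hmid (c/2) (t/2) (by positivity) (by positivity) ?_
      rw [smul_smul, smul_smul]
      rw [add_comm]; ring_nf
    · exact ⟨c, hc.le, rfl⟩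

lemma iInter_eq_ray {K s₁ : Set (Eu 2)} {x y₁ u₁ u₂ : Eu 2}
    (hx₁ : x ∈ s₁) (hy₁ : y₁ ∈ s₁) (hs₁K : s₁ ⊆ K)
    (hN₁ : ∀ z ∈ s₁, u₁ ∈ normalCone K z)
    (hdec : ∀ u ∈ normalCone K x, ∃ a b : ℝ, 0 ≤ a ∧ 0 ≤ b ∧ u = a • u₁ + b • u₂)
    (hstrict : ⟪u₂, y₁ - x⟫ < 0) :
    (⋂ y ∈ s₁, normalCone K y) = ray u₁ := by
  apply Subset.antisymm
  · intro u hu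
    simp only [mem_iInter] at hu
    have huNx : u ∈ normalCone K x := hu x hx₁
    have huNy : u ∈ normalCone K y₁ := hu y₁ hy₁
    obtain ⟨a, b, ha, hb, hab⟩ := hdec u huNx
    have h0 : ⟪u, y₁ - x⟫ = 0 := nc_inner_eq (hs₁K hx₁) (hs₁K hy₁) huNx huNy
    have h0' : ⟪u₁, y₁ - x⟫ = 0 := nc_inner_eq (hs₁K hx₁) (hs₁K hy₁) (hN₁ x hx₁) (hN₁ y₁ hy₁)
    have hb0 : b = 0 := by
      rw [hab, inner_add_left, real_inner_smul_left, real_inner_smul_left, h0'] at h0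
      nlinarith
    exact ⟨a, ha, by rw [hab, hb0, zero_smul, add_zero]⟩
  · rintro w ⟨t, ht, rfl⟩
    simp only [mem_iInter]
    intro z hz
    exact nc_smul ht (hN₁ z hz)

lemma backward_dir {K : Set (Eu 2)} (hconv : Convex ℝ K) (h0 : (0 : Eu 2) ∈ interior K)
    {x : Eu 2}
    (h : ∃ s₁ s₂ : Set (Eu 2), IsFace K s₁ ∧ IsFace K s₂ ∧
        Module.finrank ℝ (affineSpan ℝ s₁).direction = 1 ∧
        Module.finrank ℝ (affineSpan ℝ s₂).direction = 1 ∧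
        s₁ ≠ s₂ ∧ {x} = s₁ ∩ s₂) :
    Module.finrank ℝ (Submodule.span ℝ (normalCone K x)) = 2 ∧
      ∀ r : Set (Eu 2), IsFace (normalCone K x) r →
        Module.finrank ℝ (Submodule.span ℝ r) = 1 →
        ∃ s : Set (Eu 2), IsFace K s ∧ s.Nonempty ∧ r = ⋂ y ∈ s, normalCone K y := by
  obtain ⟨s₁, s₂, hs₁, hs₂, hd₁, hd₂, hne, hcap⟩ := h
  have hx₁ : x ∈ s₁ := (show x ∈ s₁ ∩ s₂ from hcap ▸ rfl).1
  have hx₂ : x ∈ s₂ := (show x ∈ s₁ ∩ s₂ from hcap ▸ rfl).2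
  obtain ⟨u₁, y₁, hu₁0, hy₁s, hy₁x, hN₁⟩ := seg_normal hconv h0 hs₁ hd₁ hx₁
  obtain ⟨u₂, y₂, hu₂0, hy₂s, hy₂x, hN₂⟩ := seg_normal hconv h0 hs₂ hd₂ hx₂
  have hu₁N : u₁ ∈ normalCone K x := hN₁ x hx₁
  have hu₂N : u₂ ∈ normalCone K x := hN₂ x hx₂
  have hp₁ : ⟪u₁, y₁ - x⟫ = 0 := nc_inner_eq (hs₁.1 hx₁) (hs₁.1 hy₁s) hu₁N (hN₁ y₁ hy₁s)
  have hp₂ : ⟪u₂, y₂ - x⟫ = 0 := nc_inner_eq (hs₂.1 hx₂) (hs₂.1 hy₂s) hu₂N (hN₂ y₂ hy₂s)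
  have hind := normals_indep hs₁ hs₂ hcap hy₁s hy₁x hy₂s hy₂x hu₁0 hu₂0 hp₁ hp₂
  have hdec := cone_decomp (hs₁.1 hy₁s) (hs₂.1 hy₂s) hy₁x hy₂x hu₁N hu₂N hind hp₁ hp₂
  have hstrict₁ : ⟪u₂, y₁ - x⟫ < 0 := by
    rcases (hu₂N y₁ (hs₁.1 hy₁s)).lt_or_eq with h | h
    · exact h
    · exact absurd (by have := perp_two hind hp₁ h; rwa [sub_eq_zero] at this) hy₁x
  have hstrict₂ : ⟪u₁, y₂ - x⟫ < 0 := by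
    rcases (hu₁N y₂ (hs₂.1 hy₂s)).lt_or_eq with h | h
    · exact h
    · exact absurd (by have := perp_two hind h hp₂; rwa [sub_eq_zero] at this) hy₂x
  constructor
  · have hle : Submodule.span ℝ {u₁, u₂} ≤ Submodule.span ℝ (normalCone K x) :=
      Submodule.span_mono (by rintro w (rfl | rfl); exacts [hu₁N, hu₂N])
    have : Submodule.span ℝ (normalCone K x) = ⊤ :=
      top_le_iff.1 (span_pair_top hind ▸ hle)
    rw [this, finrank_top, finrank_euclideanSpace_fin]
  · intro r hface hr1
    rcases ray_face hu₁N hu₂N hind hdec hface hr1 with h | h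
    · exact ⟨s₁, hs₁, ⟨x, hx₁⟩,
        by rw [h, iInter_eq_ray hx₁ hy₁s hs₁.1 hN₁ hdec hstrict₁]⟩
    · refine ⟨s₂, hs₂, ⟨x, hx₂⟩, ?_⟩
      have hdec' : ∀ u ∈ normalCone K x, ∃ a b : ℝ, 0 ≤ a ∧ 0 ≤ b ∧ u = a • u₂ + b • u₁ := by
        intro u hu
        obtain ⟨a, b, ha, hb, hab⟩ := hdec u hu
        exact ⟨b, a, hb, ha, by rw [hab, add_comm]⟩
      rw [h, iInter_eq_ray hx₂ hy₂s hs₂.1 hN₂ hdec' hstrict₂]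

/-- A strictly positive functional on a salient closed 2D cone. -/
lemma dual_strict {C : Set (Eu 2)} (hcl : IsClosed C) (hconvC : Convex ℝ C)
    (h0C : (0:Eu 2) ∈ C) (hsmul : ∀ t : ℝ, 0 ≤ t → ∀ u ∈ C, t • u ∈ C)
    (hsal : ∀ u : Eu 2, u ∈ C → -u ∈ C → u = 0) :
    ∃ (w : Eu 2) (δ : ℝ), 0 < δ ∧ ∀ u ∈ C, δ * ‖u‖ ≤ ⟪w, u⟫ := by
  set Cs : Set (Eu 2) := {w | ∀ u ∈ C, 0 ≤ ⟪w, u⟫} with hCs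
  have hCs0 : (0:Eu 2) ∈ Cs := fun u _ => by simp
  have hCsconv : Convex ℝ Cs := by
    intro p hp q hq a b ha hb hab u hu
    have h1 := hp u hu
    have h2 := hq u hu
    rw [inner_add_left, real_inner_smul_left, real_inner_smul_left]
    positivity
  -- separation step: anything outside C is negative against some element of Cs
  have hsep : ∀ v : Eu 2, v ∉ C → ∃ w ∈ Cs, ⟪w, v⟫ < 0 := by
    intro v hv
    obtain ⟨f, c, hfv, hfC⟩ := geometric_hahn_banach_point_closed hconvC hcl hv
    have hc0 : c < 0 := by simpa using hfC 0 h0C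
    have hfnn : ∀ b ∈ C, 0 ≤ f b := by
      intro b hb
      by_contra hneg
      push_neg at hneg
      have ht : 0 < c / f b := div_pos_of_neg_of_neg hc0 hneg
      have := hfC _ (hsmul _ ht.le b hb)
      rw [map_smul, smul_eq_mul, div_mul_cancel₀ c (ne_of_lt hneg)] at this
      exact lt_irrefl _ this
    refine ⟨(InnerProductSpace.toDual ℝ (Eu 2)).symm f, ?_, ?_⟩
    · intro u hu
      rw [show ⟪(InnerProductSpace.toDual ℝ (Eu 2)).symm f, u⟫ = f u from
        InnerProductSpace.toDual_symm_apply]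
      exact hfnn u hu
    · rw [show ⟪(InnerProductSpace.toDual ℝ (Eu 2)).symm f, v⟫ = f v from
        InnerProductSpace.toDual_symm_apply]
      linarith
  -- the dual cone spans
  have hspan : Submodule.span ℝ Cs = ⊤ := by
    by_contra hne
    have hbot : (Submodule.span ℝ Cs)ᗮ ≠ ⊥ := fun h => hne (Submodule.orthogonal_eq_bot_iff.1 h)
    obtain ⟨v, hvmem, hv0⟩ := (Submodule.ne_bot_iff _).1 hbot
    have hperp : ∀ w ∈ Cs, ⟪w, v⟫ = 0 := fun w hw =>
      (Submodule.mem_orthogonal _ v).1 hvmem w (Submodule.subset_span hw)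
    have hvC : v ∈ C := by
      by_contra h
      obtain ⟨w, hwCs, hwv⟩ := hsep v h
      rw [hperp w hwCs] at hwv
      exact lt_irrefl _ hwv
    have hvC' : -v ∈ C := by
      by_contra h
      obtain ⟨w, hwCs, hwv⟩ := hsep _ h
      rw [inner_neg_right, hperp w hwCs] at hwv
      simp at hwv
    exact hv0 (hsal v hvC hvC')
  have haff : affineSpan ℝ Cs = ⊤ := by
    have hdir : vectorSpan ℝ Cs = ⊤ := by
      rw [← top_le_iff, ← hspan, vectorSpan_def]
      apply Submodule.span_le.2
      intro z hz
      have : z -ᵥ (0:Eu 2) ∈ Cs -ᵥ Cs := Set.vsub_mem_vsub hz hCs0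
      rw [vsub_eq_sub, sub_zero] at this
      exact Submodule.subset_span this
    rw [← direction_affineSpan] at hdir
    exact (AffineSubspace.direction_eq_top_iff_of_nonempty
      ⟨0, subset_affineSpan ℝ Cs hCs0⟩).1 hdir
  have hint : (interior Cs).Nonempty := by
    have := interior_convexHull_nonempty_iff_affineSpan_eq_top.2 haff
    rwa [hCsconv.convexHull_eq] at this
  obtain ⟨w₀, hw₀⟩ := hint
  obtain ⟨δ, hδ, hball⟩ := Metric.mem_nhds_iff.1 (mem_interior_iff_mem_nhds.1 hw₀)
  refine ⟨w₀, δ/2, by positivity, ?_⟩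
  intro u hu
  rcases eq_or_ne u 0 with rfl | hu0
  · simp
  · have hnu : (0:ℝ) < ‖u‖ := norm_pos_iff.2 hu0
    have hw' : w₀ - ((δ/2) * ‖u‖⁻¹) • u ∈ Cs := by
      apply hball
      rw [Metric.mem_ball, dist_eq_norm, sub_sub_cancel_left, norm_neg, norm_smul,
        Real.norm_eq_abs, abs_of_pos (by positivity)]
      rw [mul_assoc, inv_mul_cancel₀ (ne_of_gt hnu), mul_one]
      linarith
    have h2 := hw' u hu
    rw [inner_sub_left, real_inner_smul_left, real_inner_self_eq_norm_sq] at h2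
    have hn2 : ‖u‖⁻¹ * ‖u‖^2 = ‖u‖ := by field_simp
    nlinarith [h2]

lemma exposed_dir_one {K : Set (Eu 2)} {a x y₀ : Eu 2} (ha : a ≠ 0)
    (hy₀K : y₀ ∈ K) (hy₀x : y₀ ≠ x) (hy₀ : ⟪a, y₀ - x⟫ = 0) (hxK : x ∈ K) :
    Module.finrank ℝ (affineSpan ℝ {z ∈ K | ⟪a, z - x⟫ = 0}).direction = 1 := by
  set S : Set (Eu 2) := {z ∈ K | ⟪a, z - x⟫ = 0} with hS
  have hxS : x ∈ S := ⟨hxK, by rw [sub_self, inner_zero_right]⟩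
  have hyS : y₀ ∈ S := ⟨hy₀K, hy₀⟩
  rw [direction_affineSpan]
  have hle : vectorSpan ℝ S ≤ (ℝ ∙ a)ᗮ := by
    rw [vectorSpan_def]
    apply Submodule.span_le.2
    rintro v ⟨z, hz, z', hz', rfl⟩
    rw [SetLike.mem_coe, Submodule.mem_orthogonal_singleton_iff_inner_right]
    show ⟪a, z -ᵥ z'⟫ = 0
    rw [vsub_eq_sub, show z - z' = (z - x) - (z' - x) by abel, inner_sub_right,
      hz.2, hz'.2, sub_zero]
  have hub : Module.finrank ℝ (vectorSpan ℝ S) ≤ 1 := by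
    have := Submodule.finrank_mono hle
    rwa [orth_finrank ha] at this
  have hne : vectorSpan ℝ S ≠ ⊥ := by
    intro h
    have hmem : y₀ -ᵥ x ∈ vectorSpan ℝ S := vsub_mem_vectorSpan ℝ hyS hxS
    rw [h, Submodule.mem_bot, vsub_eq_sub, sub_eq_zero] at hmem
    exact hy₀x hmem
  have hpos : Module.finrank ℝ (vectorSpan ℝ S) ≠ 0 := by
    intro h
    exact hne (Submodule.finrank_eq_zero.1 h)
  omega


lemma ray_of_extreme {K : Set (Eu 2)} {x w a d : Eu 2}
    (hsal : ∀ u : Eu 2, u ∈ normalCone K x → -u ∈ normalCone K x → u = 0)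
    (haC : a ∈ normalCone K x) (hwa : ⟪w, a⟫ = 1)
    (hwpos : ∀ u ∈ normalCone K x, u ≠ 0 → 0 < ⟪w, u⟫)
    (hmin : ∀ z, z ∈ normalCone K x → ⟪w, z⟫ = 1 → ⟪d, a⟫ ≤ ⟪d, z⟫)
    (hinj : ∀ z, z ∈ normalCone K x → ⟪w, z⟫ = 1 → ⟪d, z⟫ = ⟪d, a⟫ → z = a) :
    IsFace (normalCone K x) (ray a) := by
  refine ⟨?_, ?_, ?_⟩
  · rintro v ⟨t, ht, rfl⟩
    exact nc_smul ht haC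
  · rintro v ⟨t, ht, rfl⟩ v' ⟨t', ht', rfl⟩ c c' hc hc' hcc
    exact ⟨c * t + c' * t', by positivity, by rw [smul_smul, smul_smul, add_smul]⟩
  · rintro p₀ hp₀ z₀ hz₀ y₀ ⟨s, hs, rfl⟩ ⟨t, t', ht, ht', htt', heq⟩
    rcases hs.lt_or_eq with hspos | hszero
    · -- s > 0
      rcases eq_or_ne p₀ 0 with rfl | hp₀0
      · refine ⟨⟨0, le_refl 0, (zero_smul ℝ a).symm⟩, ⟨t'⁻¹ * s, by positivity, ?_⟩⟩
        rw [smul_zero, zero_add] at heq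
        rw [mul_smul, ← heq, smul_smul, inv_mul_cancel₀ (ne_of_gt ht'), one_smul]
      rcases eq_or_ne z₀ 0 with rfl | hz₀0
      · refine ⟨⟨t⁻¹ * s, by positivity, ?_⟩, ⟨0, le_refl 0, (zero_smul ℝ a).symm⟩⟩
        rw [smul_zero, add_zero] at heq
        rw [mul_smul, ← heq, smul_smul, inv_mul_cancel₀ (ne_of_gt ht), one_smul]
      · -- both nonzero
        have hα : 0 < ⟪w, p₀⟫ := hwpos p₀ hp₀ hp₀0
        have hβ : 0 < ⟪w, z₀⟫ := hwpos z₀ hz₀ hz₀0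
        set α := ⟪w, p₀⟫
        set β := ⟪w, z₀⟫
        have hsum : t * α + t' * β = s := by
          have h' : ⟪w, t • p₀ + t' • z₀⟫ = ⟪w, s • a⟫ := by rw [heq]
          rw [inner_add_right, real_inner_smul_right, real_inner_smul_right,
            real_inner_smul_right, hwa, mul_one] at h'
          exact h'
        set P₁ : Eu 2 := α⁻¹ • p₀ with hP₁
        set Z₁ : Eu 2 := β⁻¹ • z₀ with hZ₁
        have hP₁C : P₁ ∈ normalCone K x := nc_smul (by positivity) hp₀
        have hZ₁C : Z₁ ∈ normalCone K x := nc_smul (by positivity) hz₀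
        have hwP₁ : ⟪w, P₁⟫ = 1 := by
          rw [hP₁, real_inner_smul_right, inv_mul_cancel₀ (ne_of_gt hα)]
        have hwZ₁ : ⟪w, Z₁⟫ = 1 := by
          rw [hZ₁, real_inner_smul_right, inv_mul_cancel₀ (ne_of_gt hβ)]
        have hcomb : a = (t * α / s) • P₁ + (t' * β / s) • Z₁ := by
          have : s • a = (t * α) • P₁ + (t' * β) • Z₁ := by
            rw [hP₁, hZ₁, smul_smul, smul_smul,
              mul_assoc, mul_inv_cancel₀ (ne_of_gt hα), mul_one,
              mul_assoc, mul_inv_cancel₀ (ne_of_gt hβ), mul_one, heq]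
          have h2 := congrArg (fun z => s⁻¹ • z) this
          simp only [smul_smul, inv_mul_cancel₀ (ne_of_gt hspos), one_smul, smul_add] at h2
          rw [h2, show s⁻¹ * (t * α) = t * α / s by ring,
            show s⁻¹ * (t' * β) = t' * β / s by ring]
        have hda : ⟪d, a⟫ = (t * α / s) * ⟪d, P₁⟫ + (t' * β / s) * ⟪d, Z₁⟫ := by
          have := congrArg (fun z => ⟪d, z⟫) hcomb
          simp only [inner_add_right, real_inner_smul_right] at this
          exact this
        have hc₁ : 0 < t * α / s := by positivity
        have hc₂ : 0 < t' * β / s := by positivity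
        have hcsum : t * α / s + t' * β / s = 1 := by
          field_simp
          linarith
        have h₁ := hmin P₁ hP₁C hwP₁
        have h₂ := hmin Z₁ hZ₁C hwZ₁
        have hP₁a : ⟪d, P₁⟫ = ⟪d, a⟫ := by
          by_contra hne
          have hlt : ⟪d, a⟫ < ⟪d, P₁⟫ := lt_of_le_of_ne h₁ (fun h => hne h.symm)
          have e1 := mul_lt_mul_of_pos_left hlt hc₁
          have e2 := mul_le_mul_of_nonneg_left h₂ hc₂.le
          have e3 : (t * α / s) * ⟪d, a⟫ + (t' * β / s) * ⟪d, a⟫ = ⟪d, a⟫ := by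
            rw [← add_mul, hcsum, one_mul]
          linarith
        have hZ₁a : ⟪d, Z₁⟫ = ⟪d, a⟫ := by
          by_contra hne
          have hlt : ⟪d, a⟫ < ⟪d, Z₁⟫ := lt_of_le_of_ne h₂ (fun h => hne h.symm)
          have e1 := mul_lt_mul_of_pos_left hlt hc₂
          have e2 := mul_le_mul_of_nonneg_left h₁ hc₁.le
          have e3 : (t * α / s) * ⟪d, a⟫ + (t' * β / s) * ⟪d, a⟫ = ⟪d, a⟫ := by
            rw [← add_mul, hcsum, one_mul]
          linarith
        have heP := hinj P₁ hP₁C hwP₁ hP₁a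
        have heZ := hinj Z₁ hZ₁C hwZ₁ hZ₁a
        constructor
        · refine ⟨α, hα.le, ?_⟩
          rw [← heP, hP₁, smul_smul, mul_inv_cancel₀ (ne_of_gt hα), one_smul]
        · refine ⟨β, hβ.le, ?_⟩
          rw [← heZ, hZ₁, smul_smul, mul_inv_cancel₀ (ne_of_gt hβ), one_smul]
    · -- s = 0
      rw [← hszero, zero_smul] at heq
      have h₁ : t • p₀ ∈ normalCone K x := nc_smul ht.le hp₀
      have h₂ : -(t • p₀) ∈ normalCone K x := by
        have : -(t • p₀) = t' • z₀ := by
          rw [neg_eq_iff_add_eq_zero]; exact heq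
        rw [this]; exact nc_smul ht'.le hz₀
      have hp0 : t • p₀ = 0 := hsal _ h₁ h₂
      have hz0 : t' • z₀ = 0 := by
        have := heq
        rw [hp0, zero_add] at this
        exact this
      have hp₀0 : p₀ = 0 := (smul_eq_zero.1 hp0).resolve_left (ne_of_gt ht)
      have hz₀0 : z₀ = 0 := (smul_eq_zero.1 hz0).resolve_left (ne_of_gt ht')
      exact ⟨⟨0, le_refl 0, by rw [hp₀0, zero_smul]⟩, ⟨0, le_refl 0, by rw [hz₀0, zero_smul]⟩⟩

lemma forward_dir {K : Set (Eu 2)} (hconv : Convex ℝ K) (h0 : (0 : Eu 2) ∈ interior K)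
    {x : Eu 2} (hx : x ∈ K)
    (h1 : Module.finrank ℝ (Submodule.span ℝ (normalCone K x)) = 2)
    (h2 : ∀ r : Set (Eu 2), IsFace (normalCone K x) r →
        Module.finrank ℝ (Submodule.span ℝ r) = 1 →
        ∃ s : Set (Eu 2), IsFace K s ∧ s.Nonempty ∧ r = ⋂ y ∈ s, normalCone K y) :
    ∃ s₁ s₂ : Set (Eu 2), IsFace K s₁ ∧ IsFace K s₂ ∧
        Module.finrank ℝ (affineSpan ℝ s₁).direction = 1 ∧
        Module.finrank ℝ (affineSpan ℝ s₂).direction = 1 ∧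
        s₁ ≠ s₂ ∧ {x} = s₁ ∩ s₂ := by
  set C : Set (Eu 2) := normalCone K x with hC
  obtain ⟨w, δ, hδ, hpos⟩ := dual_strict nc_closed nc_convex nc_zero
    (fun t ht u hu => nc_smul ht hu) (fun u hu hu' => nc_salient h0 hu hu')
  -- two independent elements of C
  have hp : ∃ p ∈ C, p ≠ 0 := by
    by_contra h
    push_neg at h
    have : C ⊆ {0} := fun v hv => h v hv
    have : Submodule.span ℝ C ≤ ⊥ := by
      rw [← Submodule.span_singleton_eq_bot.mpr rfl]
      exact Submodule.span_mono this
    rw [le_bot_iff.1 this] at h1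
    simp at h1
  obtain ⟨p, hpC, hp0⟩ := hp
  have hq : ∃ q ∈ C, LinearIndependent ℝ ![p, q] := by
    by_contra h
    push_neg at h
    have hsub : C ⊆ (ℝ ∙ p : Submodule ℝ (Eu 2)) := by
      intro q hqC
      have := h q hqC
      rw [LinearIndependent.pair_iff' hp0] at this
      push_neg at this
      obtain ⟨c, hc⟩ := this
      exact Submodule.mem_span_singleton.2 ⟨c, hc⟩
    have : Submodule.span ℝ C ≤ ℝ ∙ p := Submodule.span_le.2 hsub
    have h' := Submodule.finrank_mono this
    rw [h1, finrank_span_singleton hp0] at h'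
    omega
  obtain ⟨q, hqC, hind⟩ := hq
  have hq0 : q ≠ 0 := by
    rintro rfl
    rw [LinearIndependent.pair_iff' hp0] at hind
    exact hind 0 (by rw [zero_smul])
  have hwp : 0 < ⟪w, p⟫ := lt_of_lt_of_le (mul_pos hδ (norm_pos_iff.2 hp0)) (hpos p hpC)
  have hwq : 0 < ⟪w, q⟫ := lt_of_lt_of_le (mul_pos hδ (norm_pos_iff.2 hq0)) (hpos q hqC)
  -- the base of the cone
  set B : Set (Eu 2) := C ∩ {z | ⟪w, z⟫ = 1} with hB
  have hBsub : B ⊆ C := fun z hz => hz.1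
  have hmemB : ∀ v : Eu 2, v ∈ C → 0 < ⟪w, v⟫ → ⟪w, v⟫⁻¹ • v ∈ B := by
    intro v hv hwv
    refine ⟨nc_smul (by positivity) hv, ?_⟩
    rw [mem_setOf_eq, real_inner_smul_right, inv_mul_cancel₀ (ne_of_gt hwv)]
  set P : Eu 2 := ⟪w, p⟫⁻¹ • p with hP
  set Q : Eu 2 := ⟪w, q⟫⁻¹ • q with hQ
  have hPB : P ∈ B := hmemB p hpC hwp
  have hQB : Q ∈ B := hmemB q hqC hwq
  have hPQ : P ≠ Q := by
    intro h
    rw [LinearIndependent.pair_iff' hp0] at hind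
    refine hind (⟪w, q⟫ * ⟪w, p⟫⁻¹) ?_
    have : ⟪w, q⟫ • P = ⟪w, q⟫ • Q := by rw [h]
    rw [hP, hQ, smul_smul, smul_smul, mul_inv_cancel₀ (ne_of_gt hwq), one_smul] at this
    exact this
  -- compactness of the base
  have hBclosed : IsClosed B := nc_closed.inter
    (isClosed_eq (Continuous.inner continuous_const continuous_id) continuous_const)
  have hBbdd : Bornology.IsBounded B := by
    rw [isBounded_iff_forall_norm_le]
    refine ⟨δ⁻¹, fun z hz => ?_⟩
    have h' := hpos z hz.1
    rw [hz.2] at h'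
    rw [← one_div]
    rw [le_div_iff₀ hδ]
    linarith
  have hBcpt : IsCompact B := Metric.isCompact_of_isClosed_isBounded hBclosed hBbdd
  -- min and max of the linear functional ⟪P - Q, ·⟫
  set d : Eu 2 := P - Q with hd
  have hd0 : d ≠ 0 := sub_ne_zero.2 hPQ
  have hwd : ⟪w, d⟫ = 0 := by
    rw [hd, inner_sub_right, hPB.2, hQB.2, sub_self]
  have hw0 : w ≠ 0 := by
    rintro rfl
    rw [inner_zero_left] at hwp
    exact lt_irrefl _ hwp
  have hwdind : LinearIndependent ℝ ![w, d] := by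
    rw [LinearIndependent.pair_iff' hw0]
    intro c hc
    have : ⟪w, c • w⟫ = 0 := by rw [hc]; exact hwd
    rw [real_inner_smul_right, real_inner_self_eq_norm_sq] at this
    have hc0 : c = 0 := by
      have hsq : (0:ℝ) < ‖w‖^2 := by
        have hnw : (0:ℝ) < ‖w‖ := norm_pos_iff.2 hw0
        positivity
      exact (mul_eq_zero.1 this).resolve_right (ne_of_gt hsq)
    rw [hc0, zero_smul] at hc
    exact hd0 hc.symm
  have hinj : ∀ z ∈ B, ∀ z' ∈ B, ⟪d, z⟫ = ⟪d, z'⟫ → z = z' := by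
    intro z hz z' hz' hdd
    have h1' : ⟪w, z - z'⟫ = 0 := by rw [inner_sub_right, hz.2, hz'.2, sub_self]
    have h2' : ⟪d, z - z'⟫ = 0 := by rw [inner_sub_right, hdd, sub_self]
    have := perp_two hwdind h1' h2'
    rwa [sub_eq_zero] at this
  have hcont : Continuous fun z : Eu 2 => ⟪d, z⟫ :=
    Continuous.inner continuous_const continuous_id
  obtain ⟨a, haB, hamin⟩ := hBcpt.exists_isMinOn ⟨P, hPB⟩ hcont.continuousOn
  obtain ⟨b, hbB, hbmax⟩ := hBcpt.exists_isMaxOn ⟨P, hPB⟩ hcont.continuousOn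
  have hab : a ≠ b := by
    intro h
    have h1' : ⟪d, a⟫ ≤ ⟪d, Q⟫ := hamin hQB
    have h2' : ⟪d, P⟫ ≤ ⟪d, b⟫ := hbmax hPB
    have h3' : ⟪d, Q⟫ < ⟪d, P⟫ := by
      have : ⟪d, P⟫ - ⟪d, Q⟫ = ‖d‖^2 := by
        rw [← inner_sub_right, ← hd, real_inner_self_eq_norm_sq]
      have hnd : (0:ℝ) < ‖d‖ := norm_pos_iff.2 hd0
      nlinarith
    rw [h] at h1'
    linarith
  have ha0 : a ≠ 0 := by
    rintro rfl
    have := haB.2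
    rw [mem_setOf_eq, inner_zero_right] at this
    norm_num at this
  have hb0 : b ≠ 0 := by
    rintro rfl
    have := hbB.2
    rw [mem_setOf_eq, inner_zero_right] at this
    norm_num at this
  -- positivity of w on the cone
  have hwpos : ∀ u ∈ C, u ≠ 0 → 0 < ⟪w, u⟫ := fun u hu hu0 =>
    lt_of_lt_of_le (mul_pos hδ (norm_pos_iff.2 hu0)) (hpos u hu)
  have hsal : ∀ u : Eu 2, u ∈ normalCone K x → -u ∈ normalCone K x → u = 0 :=
    fun u hu hu' => nc_salient h0 hu hu'
  -- the two rays are faces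
  have hface_a : IsFace C (ray a) :=
    ray_of_extreme hsal haB.1 haB.2 hwpos
      (fun z hz h1z => hamin ⟨hz, h1z⟩)
      (fun z hz h1z hdz => hinj z ⟨hz, h1z⟩ a haB hdz)
  have hface_b : IsFace C (ray b) := by
    refine ray_of_extreme (d := -d) hsal hbB.1 hbB.2 hwpos ?_ ?_
    · intro z hz h1z
      rw [inner_neg_left, inner_neg_left, neg_le_neg_iff]
      exact hbmax ⟨hz, h1z⟩
    · intro z hz h1z hdz
      rw [inner_neg_left, inner_neg_left, neg_inj] at hdz
      exact hinj z ⟨hz, h1z⟩ b hbB hdz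
  -- spans of the rays
  have hrayspan : ∀ v : Eu 2, v ≠ 0 → Module.finrank ℝ (Submodule.span ℝ (ray v)) = 1 := by
    intro v hv
    have : Submodule.span ℝ (ray v) = ℝ ∙ v := by
      apply le_antisymm
      · apply Submodule.span_le.2
        rintro z ⟨t, ht, rfl⟩
        exact Submodule.smul_mem _ _ (Submodule.mem_span_singleton_self v)
      · rw [Submodule.span_singleton_le_iff_mem]
        exact Submodule.subset_span ⟨1, by norm_num, (one_smul ℝ v).symm⟩
    rw [this, finrank_span_singleton hv]
  obtain ⟨sa, hsaF, hsaNe, heqa⟩ := h2 (ray a) hface_a (hrayspan a ha0)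
  obtain ⟨sb, hsbF, hsbNe, heqb⟩ := h2 (ray b) hface_b (hrayspan b hb0)
  -- extract a second point from each face
  have hsecond : ∀ (v : Eu 2) (sv : Set (Eu 2)), v ≠ 0 → IsFace K sv → sv.Nonempty →
      ray v = ⋂ y ∈ sv, normalCone K y → v ∈ C →
      ∃ y₀ ∈ sv, y₀ ≠ x ∧ ⟪v, y₀ - x⟫ = 0 := by
    intro v sv hv0 hsvF hsvNe heqv hvC
    have hy : ∃ y₀ ∈ sv, y₀ ≠ x := by
      by_contra h
      push_neg at h
      have hsv : sv = {x} := by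
        obtain ⟨z, hz⟩ := hsvNe
        refine Subset.antisymm (fun z' hz' => h z' hz') ?_
        rintro z' rfl
        rw [← h z hz]
        exact hz
      rw [hsv] at heqv
      simp only [mem_singleton_iff, iInter_iInter_eq_left] at heqv
      have h1' : Module.finrank ℝ (Submodule.span ℝ (ray v)) = 2 := by
        rw [heqv]; exact h1
      exact absurd (h1'.symm.trans (hrayspan v hv0)) (by norm_num)
    obtain ⟨y₀, hy₀sv, hy₀x⟩ := hy
    have hvNy : v ∈ normalCone K y₀ := by
      have hvray : v ∈ ray v := ⟨1, by norm_num, (one_smul ℝ v).symm⟩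
      rw [heqv] at hvray
      exact mem_iInter₂.1 hvray y₀ hy₀sv
    exact ⟨y₀, hy₀sv, hy₀x, nc_inner_eq hx (hsvF.1 hy₀sv) hvC hvNy⟩
  obtain ⟨ya, hyasv, hyax, hperpa⟩ := hsecond a sa ha0 hsaF hsaNe heqa haB.1
  obtain ⟨yb, hybsv, hybx, hperpb⟩ := hsecond b sb hb0 hsbF hsbNe heqb hbB.1
  -- the two exposed segments
  set S₁ : Set (Eu 2) := {z ∈ K | ⟪a, z - x⟫ = 0} with hS₁
  set S₂ : Set (Eu 2) := {z ∈ K | ⟪b, z - x⟫ = 0} with hS₂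
  have hS₁F : IsFace K S₁ := face_exposed hconv haB.1
  have hS₂F : IsFace K S₂ := face_exposed hconv hbB.1
  have hxS₁ : x ∈ S₁ := ⟨hx, by rw [sub_self, inner_zero_right]⟩
  have hxS₂ : x ∈ S₂ := ⟨hx, by rw [sub_self, inner_zero_right]⟩
  have hyaS₁ : ya ∈ S₁ := ⟨hsaF.1 hyasv, hperpa⟩
  have hd₁ : Module.finrank ℝ (affineSpan ℝ S₁).direction = 1 :=
    exposed_dir_one ha0 (hsaF.1 hyasv) hyax hperpa hx
  have hd₂ : Module.finrank ℝ (affineSpan ℝ S₂).direction = 1 :=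
    exposed_dir_one hb0 (hsbF.1 hybsv) hybx hperpb hx
  -- a and b are independent
  have hindab : LinearIndependent ℝ ![a, b] := by
    rw [LinearIndependent.pair_iff' ha0]
    intro c hc
    have : ⟪w, c • a⟫ = 1 := by rw [hc]; exact hbB.2
    rw [real_inner_smul_right, haB.2, mul_one] at this
    rw [this, one_smul] at hc
    exact hab hc
  refine ⟨S₁, S₂, hS₁F, hS₂F, hd₁, hd₂, ?_, ?_⟩
  · intro h
    have hyaS₂ : ya ∈ S₂ := h ▸ hyaS₁
    have := perp_two hindab hperpa hyaS₂.2
    rw [sub_eq_zero] at this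
    exact hyax this
  · apply Subset.antisymm
    · rintro z rfl
      exact ⟨hxS₁, hxS₂⟩
    · rintro z ⟨⟨_, h₁⟩, ⟨_, h₂⟩⟩
      have := perp_two hindab h₁ h₂
      rw [sub_eq_zero] at this
      exact this ▸ rfl

end Helpers

/-- an exposed point `x` of a planar convex body is a polyhedral corner
(its normal cone is two-dimensional and every one-dimensional face of the normal cone
is a normal cone of `K`, i.e. of the form `⋂_{y ∈ s} N(y)` for a nonempty face `s`)
iff `x` is the intersection of two distinct segments of `K`. -/
theorem stmt18 (K : Set (Eu 2)) (hK : IsCompact K) (hconv : Convex ℝ K)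
    (h0 : (0 : Eu 2) ∈ interior K) (x : Eu 2) (hx : x ∈ K)
    (hexp : IsExposedFace K {x}) :
    (Module.finrank ℝ (Submodule.span ℝ (normalCone K x)) = 2 ∧
      ∀ r : Set (Eu 2), IsFace (normalCone K x) r →
        Module.finrank ℝ (Submodule.span ℝ r) = 1 →
        ∃ s : Set (Eu 2), IsFace K s ∧ s.Nonempty ∧ r = ⋂ y ∈ s, normalCone K y)
    ↔ ∃ s₁ s₂ : Set (Eu 2), IsFace K s₁ ∧ IsFace K s₂ ∧
        Module.finrank ℝ (affineSpan ℝ s₁).direction = 1 ∧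
        Module.finrank ℝ (affineSpan ℝ s₂).direction = 1 ∧
        s₁ ≠ s₂ ∧ {x} = s₁ ∩ s₂ := by
  constructor
  · rintro ⟨h1, h2⟩
    exact forward_dir hconv h0 hx h1 h2
  · intro h
    exact backward_dir hconv h0 h
end
end
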